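/- arXiv:1806.02128 — 11 statements merged into one kernel-verified Lean document; each statement's English description precedes it below -/
import Mathlib

section
/- Every finite nonabelian group G has a strict n-split decomposition for some positive integer n and some abelian subgroup A of G; that is, there exist an abelian subgroup A ≤ G, a positive integer n, and nonempty subsets B_1, ..., B_n of G with |B_i| ≥ 2 for every i, which together with A partition G, such that no two distinct elements within any single B_i commute. -/
private lemma commute_mul_left_iff {G : Type*} [Group G] (x a b : G) (hab : a * b = b * a) :
    Commute (x * a) (x * b) ↔ Commute x (a * b⁻¹) := by
  have h1 : Commute a b := hab
  have hinv : b⁻¹ * a = a * b⁻¹ := h1.inv_right.eq.symm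
  have hinv' : ∀ c : G, b⁻¹ * (a * c) = a * (b⁻¹ * c) := fun c => by
    rw [← mul_assoc, hinv, mul_assoc]
  unfold Commute SemiconjBy
  rw [mul_assoc x a, mul_assoc x b, mul_right_inj]
  constructor
  · intro h
    have h2 := congrArg (fun u => b⁻¹ * u * b⁻¹) h
    simp only [mul_assoc, mul_inv_cancel, inv_mul_cancel, mul_one, one_mul, mul_inv_cancel_left,
      inv_mul_cancel_left, hinv'] at h2
    simpa [mul_assoc] using h2.symm
  · intro h
    have key : x * a = a * (b⁻¹ * (x * b)) := by
      have := congrArg (fun u => u * b) h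
      simpa [mul_assoc, hinv'] using this
    calc a * (x * b) = a * (b * (b⁻¹ * (x * b))) := by simp [mul_assoc]
      _ = b * (a * (b⁻¹ * (x * b))) := by rw [← mul_assoc, hab, mul_assoc]
      _ = b * (x * a) := by rw [← key]

private lemma exists_max_abelian (G : Type*) [Group G] [Finite G] :
    ∃ A : Subgroup G, IsMulCommutative A ∧ ∀ x : G, (∀ a ∈ A, Commute a x) → x ∈ A := by
  classical
  letI := Fintype.ofFinite (Subgroup G)
  have hbot : IsMulCommutative (⊥ : Subgroup G) :=
    ⟨⟨fun a b => Subtype.ext (by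
      rw [Subgroup.coe_mul, Subgroup.coe_mul, Subgroup.mem_bot.mp a.2, Subgroup.mem_bot.mp b.2])⟩⟩
  obtain ⟨A, hAs, hmax⟩ := Finset.exists_maximal
    (s := Finset.univ.filter (fun B : Subgroup G => IsMulCommutative B))
    ⟨⊥, by simp [hbot]⟩
  have hAcomm : IsMulCommutative A := (Finset.mem_filter.mp hAs).2
  refine ⟨A, hAcomm, fun x hx => ?_⟩
  haveI := hAcomm
  set K := Subgroup.closure ((A : Set G) ∪ {x}) with hK
  have hcomm : ∀ p ∈ (A : Set G) ∪ {x}, ∀ q ∈ (A : Set G) ∪ {x}, p * q = q * p := by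
    rintro p (hp | hp) q (hq | hq)
    · exact Subgroup.mul_comm_of_mem_isMulCommutative (H := A) hp hq
    · rw [Set.mem_singleton_iff] at hq; subst hq
      exact hx p hp
    · rw [Set.mem_singleton_iff] at hp; subst hp
      exact (hx q hq).symm
    · rw [Set.mem_singleton_iff] at hp hq; subst hp; subst hq; rfl
  letI : CommGroup K := Subgroup.closureCommGroupOfComm hcomm
  have hKcomm : IsMulCommutative K := ⟨⟨mul_comm⟩⟩
  have hAK : A ≤ K := fun g hg => Subgroup.subset_closure (Or.inl hg)
  have hKA : K = A := by
    by_contra hne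
    exact hne (le_antisymm (hmax (Finset.mem_filter.mpr ⟨Finset.mem_univ _, hKcomm⟩) hAK) hAK)
  have hxK : x ∈ K := Subgroup.subset_closure (Or.inr rfl)
  rwa [hKA] at hxK

private def Dsub {G : Type*} [Group G] (A : Subgroup G) (x : G) : Subgroup A :=
  (Subgroup.centralizer {x}).subgroupOf A

private noncomputable def lab {G : Type*} [Group G] (A : Subgroup G) (x : G) (a : A) :
    Dsub A x :=
  ⟨((QuotientGroup.mk a : A ⧸ Dsub A x).out)⁻¹ * a,
    QuotientGroup.eq.mp (QuotientGroup.out_eq' _)⟩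

private lemma lab_reconstruct {G : Type*} [Group G] (A : Subgroup G) (x : G) (a : A) :
    ((QuotientGroup.mk a : A ⧸ Dsub A x).out) * (lab A x a : A) = a :=
  mul_inv_cancel_left _ _

private lemma lab_out_mul {G : Type*} [Group G] (A : Subgroup G) (x : G)
    (p : A ⧸ Dsub A x) (d : Dsub A x) :
    (QuotientGroup.mk (p.out * ↑d) : A ⧸ Dsub A x) = p ∧ lab A x (p.out * ↑d) = d := by
  have h1 : (QuotientGroup.mk (p.out * ↑d) : A ⧸ Dsub A x) = p := by
    have h : (QuotientGroup.mk p.out : A ⧸ Dsub A x) = QuotientGroup.mk (p.out * ↑d) :=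
      QuotientGroup.eq.mpr (by simp [d.2])
    exact h.symm.trans (QuotientGroup.out_eq' p)
  refine ⟨h1, Subtype.ext ?_⟩
  show ((QuotientGroup.mk (p.out * ↑d) : A ⧸ Dsub A x).out)⁻¹ * (p.out * ↑d) = ↑d
  rw [h1, inv_mul_cancel_left]

/-- An `n`-split decomposition of a group `G` with respect to an abelian subgroup `A`:
`G` is partitioned as the disjoint union of `A` and nonempty subsets `B 1, ..., B n`,
such that no two distinct elements within any single `B i` commute. -/
def IsSplitDecomp {G : Type*} [Group G] (A : Subgroup G) {n : ℕ} (B : Fin n → Set G) : Prop :=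
  IsMulCommutative A ∧
  (A : Set G) ∪ (⋃ i, B i) = Set.univ ∧
  (∀ i, Disjoint (A : Set G) (B i)) ∧
  (Pairwise fun i j => Disjoint (B i) (B j)) ∧
  (∀ i, (B i).Nonempty) ∧
  ∀ i, ∀ x ∈ B i, ∀ y ∈ B i, x ≠ y → ¬ Commute x y

/-- A strict `n`-split decomposition: an `n`-split decomposition with `|B i| ≥ 2` for all `i`. -/
def IsStrictSplitDecomp {G : Type*} [Group G] (A : Subgroup G) {n : ℕ} (B : Fin n → Set G) : Prop :=
  IsSplitDecomp A B ∧ ∀ i, 2 ≤ (B i).ncard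


private lemma main_aux {G : Type*} [Group G] [Finite G] (A : Subgroup G)
    (hAcomm : IsMulCommutative A)
    (hself : ∀ x : G, (∀ a ∈ A, Commute a x) → x ∈ A)
    (g₀ : G) (hg₀ : g₀ ∉ A) :
    ∃ n : ℕ, 0 < n ∧ ∃ B : Fin n → Set G, IsStrictSplitDecomp A B := by
  classical
  haveI := hAcomm
  have hDmem : ∀ (x : G) (a : A), a ∈ Dsub A x ↔ Commute x ↑a := by
    intro x a
    rw [Dsub, Subgroup.mem_subgroupOf, Subgroup.mem_centralizer_iff]
    constructor
    · intro h; exact h x (Set.mem_singleton x)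
    · intro h y hy; rw [Set.mem_singleton_iff] at hy; subst hy; exact h
  have key : ∀ (x : G) (a b : A), Commute (x * ↑a) (x * ↑b) ↔ b⁻¹ * a ∈ Dsub A x := by
    intro x a b
    rw [commute_mul_left_iff x ↑a ↑b
      (Subgroup.mul_comm_of_mem_isMulCommutative (H := A) a.2 b.2), hDmem]
    have hc : ((b⁻¹ * a : A) : G) = ↑a * (↑b)⁻¹ := by
      rw [show b⁻¹ * a = a * b⁻¹ from hAcomm.is_comm.comm _ _]; push_cast; rfl
    rw [hc]
  have hout : ∀ q : G ⧸ A, q ≠ QuotientGroup.mk 1 → q.out ∉ A := by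
    intro q hq hmem
    apply hq
    rw [← QuotientGroup.out_eq' q, QuotientGroup.eq]
    simpa using A.inv_mem hmem
  have hDne : ∀ x : G, x ∉ A → ∃ a : A, a ∉ Dsub A x := by
    intro x hx
    by_contra h; push_neg at h
    exact hx (hself x (fun a ha => ((hDmem x ⟨a, ha⟩).mp (h ⟨a, ha⟩)).symm))
  let ι := (q : {q : G ⧸ A // q ≠ QuotientGroup.mk 1}) × (Dsub A q.1.out)
  let Bfam : ι → Set G := fun i => {g | ∃ a : A, g = i.1.1.out * ↑a ∧ lab A i.1.1.out a = i.2}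
  have hι : Nonempty ι := by
    have hq : (QuotientGroup.mk g₀ : G ⧸ A) ≠ QuotientGroup.mk 1 := by
      rw [Ne, QuotientGroup.eq]
      intro h
      exact hg₀ (by simpa using A.inv_mem h)
    exact ⟨⟨⟨_, hq⟩, 1⟩⟩
  have hBnotA : ∀ (i : ι) (g : G), g ∈ Bfam i → g ∉ A := by
    rintro i g ⟨a, rfl, -⟩ hg
    exact hout i.1.1 i.1.2 (by simpa using A.mul_mem hg (A.inv_mem a.2))
  have hcover : ∀ g : G, g ∉ A → ∃ i : ι, g ∈ Bfam i := by
    intro g hg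
    have hq : (QuotientGroup.mk g : G ⧸ A) ≠ QuotientGroup.mk 1 := by
      rw [Ne, QuotientGroup.eq]
      intro h
      exact hg (by simpa using A.inv_mem h)
    have hmem : ((QuotientGroup.mk g : G ⧸ A).out)⁻¹ * g ∈ A :=
      QuotientGroup.eq.mp (QuotientGroup.out_eq' _)
    refine ⟨⟨⟨QuotientGroup.mk g, hq⟩, lab A (QuotientGroup.mk g : G ⧸ A).out ⟨_, hmem⟩⟩,
      ⟨_, hmem⟩, ?_, rfl⟩
    exact (mul_inv_cancel_left _ _).symm
  have hdisj : ∀ i j : ι, i ≠ j → ∀ g, g ∈ Bfam i → g ∈ Bfam j → False := by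
    rintro ⟨⟨q, hq⟩, d⟩ ⟨⟨q', hq'⟩, d'⟩ hne g ⟨a, rfl, hd⟩ ⟨a', heq, hd'⟩
    dsimp only at heq hd hd'
    have h1 : (QuotientGroup.mk (q.out * ↑a) : G ⧸ A) = q := by
      have h : (QuotientGroup.mk q.out : G ⧸ A) = QuotientGroup.mk (q.out * ↑a) :=
        QuotientGroup.eq.mpr (by simp [a.2])
      exact h.symm.trans (QuotientGroup.out_eq' q)
    have h2 : (QuotientGroup.mk (q'.out * ↑a') : G ⧸ A) = q' := by
      have h : (QuotientGroup.mk q'.out : G ⧸ A) = QuotientGroup.mk (q'.out * ↑a') :=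
        QuotientGroup.eq.mpr (by simp [a'.2])
      exact h.symm.trans (QuotientGroup.out_eq' q')
    have hqq : q = q' := by rw [← h1, heq, h2]
    subst hqq
    have haa : a = a' := Subtype.ext (mul_left_cancel heq)
    subst haa
    subst hd
    subst hd'
    exact hne rfl
  have hnc : ∀ (i : ι) (g g' : G), g ∈ Bfam i → g' ∈ Bfam i → g ≠ g' → ¬ Commute g g' := by
    rintro ⟨⟨q, hq⟩, d⟩ g g' ⟨a, rfl, hd⟩ ⟨a', rfl, hd'⟩ hne hc
    dsimp only at hd hd' hc hne
    have haa : a ≠ a' := fun h => hne (by rw [h])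
    have hmk : (QuotientGroup.mk a : A ⧸ Dsub A q.out) ≠ QuotientGroup.mk a' := by
      intro h
      apply haa
      have r1 := lab_reconstruct A q.out a
      have r2 := lab_reconstruct A q.out a'
      rw [← r1, ← r2, h, hd, hd']
    rw [Ne, QuotientGroup.eq] at hmk
    exact hmk (by simpa using (Dsub A q.out).inv_mem ((key q.out a a').mp hc))
  have hcard : ∀ i : ι, ∃ g g' : G, g ∈ Bfam i ∧ g' ∈ Bfam i ∧ g ≠ g' := by
    rintro ⟨⟨q, hq⟩, d⟩
    obtain ⟨a₀, ha₀⟩ := hDne q.out (hout q hq)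
    set p₁ := (QuotientGroup.mk a₀ : A ⧸ Dsub A q.out) with hp₁
    set p₂ := (QuotientGroup.mk (1 : A) : A ⧸ Dsub A q.out) with hp₂
    have hne : p₁ ≠ p₂ := by
      rw [hp₁, hp₂, Ne, QuotientGroup.eq]
      intro h
      exact ha₀ (by simpa using (Dsub A q.out).inv_mem h)
    refine ⟨q.out * ↑(p₁.out * d), q.out * ↑(p₂.out * d),
      ⟨p₁.out * d, rfl, (lab_out_mul A q.out p₁ d).2⟩,
      ⟨p₂.out * d, rfl, (lab_out_mul A q.out p₂ d).2⟩, ?_⟩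
    intro h
    apply hne
    have h1 : (p₁.out * d : A) = p₂.out * d := Subtype.ext (mul_left_cancel h)
    have h2 : p₁.out = p₂.out := mul_right_cancel h1
    calc p₁ = QuotientGroup.mk p₁.out := (QuotientGroup.out_eq' p₁).symm
      _ = QuotientGroup.mk p₂.out := by rw [h2]
      _ = p₂ := QuotientGroup.out_eq' p₂
  letI : Fintype ι := Fintype.ofFinite ι
  have hn : 0 < Fintype.card ι := Fintype.card_pos_iff.mpr hι
  let e : Fin (Fintype.card ι) ≃ ι := (Fintype.equivFin ι).symm
  refine ⟨Fintype.card ι, hn, fun k => Bfam (e k), ⟨hAcomm, ?_, ?_, ?_, ?_, ?_⟩, ?_⟩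
  · ext g
    simp only [Set.mem_union, Set.mem_iUnion, Set.mem_univ, iff_true]
    by_cases hg : g ∈ A
    · exact Or.inl hg
    · obtain ⟨i, hi⟩ := hcover g hg
      exact Or.inr ⟨e.symm i, by rw [Equiv.apply_symm_apply]; exact hi⟩
  · intro k
    rw [Set.disjoint_left]
    intro g hgA hgB
    exact hBnotA (e k) g hgB hgA
  · intro k k' hkk'
    rw [Set.disjoint_left]
    intro g hg hg'
    exact hdisj (e k) (e k') (fun h => hkk' (e.injective h)) g hg hg'
  · intro k
    obtain ⟨g, g', hg, hg', hne⟩ := hcard (e k)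
    exact ⟨g, hg⟩
  · intro k x hx y hy hxy
    exact hnc (e k) x y hx hy hxy
  · intro k
    obtain ⟨g, g', hg, hg', hne⟩ := hcard (e k)
    exact (Set.one_lt_ncard_iff (Set.toFinite _)).mpr ⟨g, g', hg, hg', hne⟩


theorem strict_split_decomposition_exists {G : Type*} [Group G] [Finite G]
    (hG : ¬ ∀ a b : G, Commute a b) :
    ∃ (A : Subgroup G) (n : ℕ), 0 < n ∧ ∃ B : Fin n → Set G, IsStrictSplitDecomp A B := by
  obtain ⟨A, hAcomm, hself⟩ := exists_max_abelian G
  haveI := hAcomm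
  have hg₀ : ∃ g : G, g ∉ A := by
    by_contra h
    push_neg at h
    exact hG fun a b => Subgroup.mul_comm_of_mem_isMulCommutative (H := A) (h a) (h b)
  obtain ⟨g₀, hg₀⟩ := hg₀
  exact ⟨A, main_aux A hAcomm hself g₀ hg₀⟩
end

section
/- Let G be a finite group, A an abelian subgroup of G, and g ∈ G. Set n = |C_A(g)|, where C_A(g) = {a ∈ A : a*g = g*a}. Then there exist subsets B_1, ..., B_n of G such that the right coset A*g is the disjoint union of B_1, ..., B_n, no two distinct elements within any single B_i commute, and |B_i| = |A| / |C_A(g)| for every i = 1, ..., n. -/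
lemma commute_mul_g_iff {G : Type*} [Group G] (a b g : G) (hab : Commute a b) :
    Commute (a*g) (b*g) ↔ Commute (a*b⁻¹) g := by
  have hcb : Commute (a*b⁻¹) b := hab.mul_left ((Commute.refl b).inv_left)
  have step1 : Commute (a*g) (b*g) ↔ Commute (a*b⁻¹) (b*g) := by
    constructor
    · intro h
      have h2 := h.mul_left ((Commute.refl (b*g)).inv_left)
      have heq : (a*g)*(b*g)⁻¹ = a*b⁻¹ := by group
      rwa [heq] at h2
    · intro hc
      have : a*g = (a*b⁻¹)*(b*g) := by group
      rw [this]
      exact hc.mul_left (Commute.refl _)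
  rw [step1]
  constructor
  · intro h
    have h2 := hcb.inv_right.mul_right h
    rwa [show b⁻¹*(b*g)=g by group] at h2
  · intro h; exact hcb.mul_right h

theorem coset_partition_into_noncommuting_sets {G : Type*} [Group G] [Finite G]
    (A : Subgroup G) (hA : IsMulCommutative A) (g : G) :
    ∃ B : Fin (Set.ncard {a : G | a ∈ A ∧ Commute a g}) → Set G,
      (⋃ i, B i) = {x : G | x * g⁻¹ ∈ A} ∧
      (Pairwise fun i j => Disjoint (B i) (B j)) ∧
      (∀ i, ∀ x ∈ B i, ∀ y ∈ B i, x ≠ y → ¬ Commute x y) ∧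
      ∀ i, (B i).ncard = Nat.card A / Set.ncard {a : G | a ∈ A ∧ Commute a g} := by
  haveI := hA
  classical
  set S : Set G := {a : G | a ∈ A ∧ Commute a g} with hS
  set n : ℕ := S.ncard with hn
  set C : Subgroup G := A ⊓ Subgroup.centralizer {g} with hC
  have hCS : (C : Set G) = S := by
    ext x
    simp [hC, hS, Subgroup.mem_centralizer_iff, Commute, SemiconjBy, eq_comm]
  set C' : Subgroup ↥A := C.subgroupOf A with hC'
  have hmemC' : ∀ a : ↥A, a ∈ C' ↔ Commute (a : G) g := by
    intro a
    rw [hC', Subgroup.mem_subgroupOf]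
    constructor
    · intro h
      have : (a : G) ∈ S := by rw [← hCS]; exact h
      exact this.2
    · intro h
      have : (a : G) ∈ S := ⟨a.2, h⟩
      rw [← hCS] at this; exact this
  have hcardC' : Nat.card C' = n := by
    rw [hC']
    rw [Nat.card_congr (Subgroup.subgroupOfEquivOfLe (inf_le_left : C ≤ A)).toEquiv]
    rw [hn, ← hCS, ← Nat.card_coe_set_eq]
    rfl
  have hAcomm : ∀ u v : ↥A, u * v = v * u := fun u v =>
    Subtype.ext (Subgroup.mul_comm_of_mem_isMulCommutative A u.2 v.2)
  set e : ↥C' ≃ Fin n := Finite.equivFinOfCardEq hcardC' with he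
  set φ : Fin n → (↥A ⧸ C') → G :=
    fun i q => ((q.out * ((e.symm i : ↥C') : ↥A) : ↥A) : G) * g with hφ
  -- key injectivity
  have hkey : ∀ i j q q', φ i q = φ j q' → i = j ∧ q = q' := by
    intro i j q q' h
    have h1 : ((q.out * ((e.symm i : ↥C') : ↥A) : ↥A) : G)
        = ((q'.out * ((e.symm j : ↥C') : ↥A) : ↥A) : G) := mul_right_cancel h
    have h2 : (q.out * ((e.symm i : ↥C') : ↥A) : ↥A)
        = q'.out * ((e.symm j : ↥C') : ↥A) := Subtype.coe_injective h1
    have h3 := congrArg (QuotientGroup.mk (s := C')) h2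
    rw [QuotientGroup.mk_mul_of_mem _ (e.symm i).2,
      QuotientGroup.mk_mul_of_mem _ (e.symm j).2,
      QuotientGroup.out_eq', QuotientGroup.out_eq'] at h3
    subst h3
    have h4 : ((e.symm i : ↥C') : ↥A) = ((e.symm j : ↥C') : ↥A) := mul_left_cancel h2
    have h5 : (e.symm i : ↥C') = e.symm j := Subtype.coe_injective h4
    exact ⟨e.symm.injective h5, rfl⟩
  -- commuting criterion
  have hcomm : ∀ a b : ↥A, (Commute ((a:G)*g) ((b:G)*g) ↔ a*b⁻¹ ∈ C') := by
    intro a b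
    have hab : Commute (a:G) (b:G) := Subgroup.mul_comm_of_mem_isMulCommutative A a.2 b.2
    rw [commute_mul_g_iff _ _ _ hab, hmemC']
    norm_cast
  refine ⟨fun i => Set.range (φ i), ?_, ?_, ?_, ?_⟩
  · ext x
    simp only [Set.mem_iUnion, Set.mem_range, Set.mem_setOf_eq]
    constructor
    · rintro ⟨i, q, rfl⟩
      rw [hφ]
      simp only [mul_inv_cancel_right]
      exact Subtype.mem _
    · intro hx
      set a : ↥A := ⟨x * g⁻¹, hx⟩ with ha
      set q : ↥A ⧸ C' := QuotientGroup.mk a with hq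
      have hout : QuotientGroup.mk (s := C') q.out = QuotientGroup.mk a :=
        QuotientGroup.out_eq' q
      have hd : q.out⁻¹ * a ∈ C' := QuotientGroup.eq.mp hout
      refine ⟨e ⟨_, hd⟩, q, ?_⟩
      rw [hφ]
      simp only [Equiv.symm_apply_apply]
      have : q.out * (⟨q.out⁻¹ * a, hd⟩ : ↥C') = a := by
        ext; simp [mul_assoc]
      rw [this, ha]
      simp
  · intro i j hij
    rw [Set.disjoint_left]
    rintro x ⟨q, rfl⟩ ⟨q', hq'⟩
    exact hij ((hkey j i q' q hq').1).symm
  · rintro i x ⟨q, rfl⟩ y ⟨q', rfl⟩ hxy hcom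
    set c : ↥A := ((e.symm i : ↥C') : ↥A) with hc'
    have hm : (q.out * c) * (q'.out * c)⁻¹ ∈ C' := (hcomm _ _).mp hcom
    have heq : (q.out * c) * (q'.out * c)⁻¹ = q.out * q'.out⁻¹ := by group
    rw [heq] at hm
    have hm2 : q.out⁻¹ * q'.out ∈ C' := by
      rw [hAcomm]
      simpa [mul_inv_rev] using inv_mem hm
    have : q = q' := by
      rw [← QuotientGroup.out_eq' q, ← QuotientGroup.out_eq' q']
      exact QuotientGroup.eq.mpr hm2
    exact hxy (by rw [this])
  · intro i
    have hinj : Function.Injective (φ i) := fun q q' h => (hkey i i q q' h).2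
    rw [← Nat.card_coe_set_eq, Nat.card_range_of_injective hinj]
    have hcard := Subgroup.card_eq_card_quotient_mul_card_subgroup C'
    rw [← hcardC']
    have hpos : 0 < Nat.card C' := Nat.card_pos
    rw [hcard, Nat.mul_div_cancel _ hpos]
end

section
/- Suppose a finite group G has an n-split decomposition with respect to an abelian subgroup A. If U is an abelian subgroup of G not contained in A, then |U ∩ A| · (|U : U ∩ A| − 1) ≤ n. In particular, |U ∩ A| ≤ n, |U : U ∩ A| ≤ n + 1, and |U| ≤ 2n. -/
theorem abelian_subgroup_bounds {G : Type*} [Group G] [Finite G]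
    (A : Subgroup G) (n : ℕ) (B : Fin n → Set G) (h : IsSplitDecomp A B)
    (U : Subgroup G) (hU : IsMulCommutative U) (hUA : ¬ U ≤ A) :
    Nat.card ↥(U ⊓ A) * (A.relIndex U - 1) ≤ n ∧
    Nat.card ↥(U ⊓ A) ≤ n ∧ A.relIndex U ≤ n + 1 ∧ Nat.card U ≤ 2 * n := by
  obtain ⟨hAcomm, hcover, hdisj, hpair, hne, hnc⟩ := h
  set m := Nat.card ↥(U ⊓ A)
  set k := A.relIndex U
  -- each element of U \ A lies in a unique B i
  have hex : ∀ x : ((U : Set G) \ (A : Set G) : Set G), ∃ i, (x : G) ∈ B i := by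
    rintro ⟨x, hxU, hxA⟩
    have : x ∈ (A : Set G) ∪ (⋃ i, B i) := by rw [hcover]; trivial
    rcases this with h | h
    · exact absurd h hxA
    · exact Set.mem_iUnion.mp h
  choose f hf using hex
  have hfinj : Function.Injective f := by
    rintro ⟨x, hxU, hxA⟩ ⟨y, hyU, hyA⟩ hxy
    have hcomm : Commute x y := Subgroup.mul_comm_of_mem_isMulCommutative (H := U) hxU hyU
    by_contra hne'
    have hxney : x ≠ y := fun hh => hne' (Subtype.ext hh)
    exact hnc (f ⟨x, hxU, hxA⟩) x (hf _) y (hxy ▸ hf ⟨y, hyU, hyA⟩) hxney hcomm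
  have hcard_diff : Set.ncard ((U : Set G) \ (A : Set G)) ≤ n := by
    have := Nat.card_le_card_of_injective f hfinj
    rw [← Nat.card_coe_set_eq]
    simpa using this
  -- cardinalities
  have hm_eq : m = Set.ncard ((U : Set G) ∩ (A : Set G)) := by
    rw [← Nat.card_coe_set_eq, ← Subgroup.coe_inf]
    rfl
  have hmk : m * k = Nat.card U := by
    have e : (A.subgroupOf U) ≃* ↥(U ⊓ A) := by
      rw [← Subgroup.inf_subgroupOf_left]
      exact Subgroup.subgroupOfEquivOfLe inf_le_left
    have := (A.subgroupOf U).card_mul_index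
    rwa [Nat.card_congr e.toEquiv] at this
  have hmpos : 0 < m := Nat.card_pos
  have hUcard : Nat.card U = Set.ncard (U : Set G) := by
    rw [← Nat.card_coe_set_eq]; rfl
  have hdiff_eq : Set.ncard ((U : Set G) \ (A : Set G)) = Nat.card U - m := by
    have hsub : (U : Set G) ∩ (A : Set G) ⊆ (U : Set G) := Set.inter_subset_left
    have hd := Set.ncard_diff hsub (Set.toFinite _)
    rw [Set.diff_self_inter] at hd
    rw [hd, hm_eq, hUcard]
  have hkey : m * (k - 1) ≤ n := by
    have : m * (k - 1) = Nat.card U - m := by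
      rw [Nat.mul_sub_one, hmk]
    rw [this, ← hdiff_eq]; exact hcard_diff
  have hUpos : 0 < Nat.card U := Nat.card_pos
  have hk0 : k ≠ 0 := by
    intro hk; rw [hk, mul_zero] at hmk; omega
  have hk1 : k ≠ 1 := fun hk => hUA (Subgroup.relIndex_eq_one.mp hk)
  have hk2 : 2 ≤ k := by omega
  have h1 : m ≤ n := le_trans (Nat.le_mul_of_pos_right m (by omega)) hkey
  have h2 : k - 1 ≤ n := le_trans (Nat.le_mul_of_pos_left _ hmpos) hkey
  have hsplit : Nat.card U = m * (k - 1) + m := by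
    rw [← hmk]
    have : k - 1 + 1 = k := by omega
    calc m * k = m * (k - 1 + 1) := by rw [this]
      _ = m * (k - 1) + m := Nat.mul_succ _ _
  exact ⟨hkey, h1, by omega, by omega⟩
end

section
/- Suppose a finite group G has an n-split decomposition with respect to an abelian subgroup A. (i) If b ∈ G \ A and the cyclic subgroup generated by b intersects A trivially, then (o(b) − 1) · |C_A(b)| ≤ n, where o(b) is the order of b. (ii) For every b ∈ G \ A, one has |C_A(b)| ≤ n and o(b) ≤ 2n. -/
/-- Any set of pairwise commuting elements avoiding `A` has at most `n` elements. -/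
lemma card_le_of_pairwise_commute {G : Type*} [Group G] [Finite G]
    (A : Subgroup G) {n : ℕ} (B : Fin n → Set G) (h : IsSplitDecomp A B) (S : Set G)
    (hSA : ∀ x ∈ S, x ∉ A) (hc : ∀ x ∈ S, ∀ y ∈ S, Commute x y) :
    Nat.card S ≤ n := by
  obtain ⟨-, hcover, -, -, -, hanti⟩ := h
  have hex : ∀ x : S, ∃ i, (x : G) ∈ B i := by
    intro x
    have hx : (x : G) ∈ (A : Set G) ∪ ⋃ i, B i := by rw [hcover]; exact Set.mem_univ _
    rcases hx with hx | hx
    · exact absurd hx (hSA x x.2)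
    · exact Set.mem_iUnion.mp hx
  choose f hf using hex
  have hinj : Function.Injective f := by
    intro x y hxy
    by_contra hne
    have hne' : (x : G) ≠ (y : G) := fun hh => hne (Subtype.ext hh)
    exact hanti (f x) x (hf x) y (hxy ▸ hf y) hne' (hc x x.2 y y.2)
  calc Nat.card S ≤ Nat.card (Fin n) := Nat.card_le_card_of_injective f hinj
    _ = n := by simp

theorem order_and_centralizer_bounds {G : Type*} [Group G] [Finite G]
    (A : Subgroup G) (n : ℕ) (B : Fin n → Set G) (h : IsSplitDecomp A B) :
    (∀ b : G, b ∉ A → Subgroup.zpowers b ⊓ A = ⊥ →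
      (orderOf b - 1) * Nat.card ↥(A ⊓ Subgroup.centralizer {b}) ≤ n) ∧
    ∀ b : G, b ∉ A →
      Nat.card ↥(A ⊓ Subgroup.centralizer {b}) ≤ n ∧ orderOf b ≤ 2 * n := by
  haveI := h.1
  constructor
  · -- part (i)
    intro b hb hzb
    set C := A ⊓ Subgroup.centralizer {b} with hCdef
    have hbc : ∀ a : G, a ∈ C → Commute b a := fun a ha =>
      (Subgroup.mem_centralizer_iff.mp ha.2 b rfl)
    have haa : ∀ a a' : G, a ∈ C → a' ∈ C → Commute a a' := fun a a' ha ha' =>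
      Subgroup.mul_comm_of_mem_isMulCommutative A ha.1 ha'.1
    set u : Fin (orderOf b - 1) × ↥C → G := fun p => b ^ ((p.1 : ℕ) + 1) * (p.2 : G) with hu
    have hlt : ∀ k : Fin (orderOf b - 1), (k : ℕ) + 1 < orderOf b := by
      intro k
      have := k.2
      omega
    have hpow_notA : ∀ k : Fin (orderOf b - 1), b ^ ((k : ℕ) + 1) ∉ A := by
      intro k hk
      have hmem : b ^ ((k : ℕ) + 1) ∈ Subgroup.zpowers b ⊓ A :=
        ⟨pow_mem (Subgroup.mem_zpowers b) _, hk⟩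
      rw [hzb] at hmem
      have h1 : b ^ ((k : ℕ) + 1) = 1 := hmem
      have hdvd : orderOf b ∣ (k : ℕ) + 1 := orderOf_dvd_of_pow_eq_one h1
      have := Nat.le_of_dvd (Nat.succ_pos _) hdvd
      have := hlt k
      omega
    have huinj : Function.Injective u := by
      rintro ⟨k, a⟩ ⟨j, a'⟩ heq
      simp only [hu] at heq
      have hc1 : (b ^ ((j : ℕ) + 1))⁻¹ * b ^ ((k : ℕ) + 1) = (a' : G) * (a : G)⁻¹ := by
        rw [inv_mul_eq_iff_eq_mul, ← mul_assoc, ← heq]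
        group
      have hmem : (b ^ ((j : ℕ) + 1))⁻¹ * b ^ ((k : ℕ) + 1) ∈ Subgroup.zpowers b ⊓ A := by
        refine Subgroup.mem_inf.mpr ⟨?_, ?_⟩
        · exact mul_mem (inv_mem (pow_mem (Subgroup.mem_zpowers b) _))
            (pow_mem (Subgroup.mem_zpowers b) _)
        · rw [hc1]
          exact mul_mem a'.2.1 (inv_mem a.2.1)
      rw [hzb] at hmem
      have hone : (b ^ ((j : ℕ) + 1))⁻¹ * b ^ ((k : ℕ) + 1) = 1 := hmem
      have hpow : b ^ ((k : ℕ) + 1) = b ^ ((j : ℕ) + 1) := by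
        rw [inv_mul_eq_iff_eq_mul, mul_one] at hone
        exact hone
      have hkj : (k : ℕ) + 1 = (j : ℕ) + 1 :=
        pow_injOn_Iio_orderOf (Set.mem_Iio.mpr (hlt k)) (Set.mem_Iio.mpr (hlt j)) hpow
      have haeq : (a : G) = (a' : G) := by
        have : (a' : G) * (a : G)⁻¹ = 1 := by rw [← hc1, hone]
        rw [mul_inv_eq_one] at this
        exact this.symm
      exact Prod.ext (Fin.ext (Nat.add_right_cancel hkj)) (Subtype.ext haeq)
    have hS := card_le_of_pairwise_commute A B h (Set.range u)
      (by
        rintro x ⟨⟨k, a⟩, rfl⟩ hxA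
        apply hpow_notA k
        have : b ^ ((k : ℕ) + 1) = u (k, a) * (a : G)⁻¹ := by simp [hu]
        rw [this]
        exact mul_mem hxA (inv_mem a.2.1))
      (by
        rintro x ⟨⟨k, a⟩, rfl⟩ y ⟨⟨j, a'⟩, rfl⟩
        simp only [hu]
        have h1 : Commute (b ^ ((k : ℕ) + 1)) (b ^ ((j : ℕ) + 1) * (a' : G)) :=
          ((Commute.refl b).pow_pow _ _).mul_right ((hbc _ a'.2).pow_left _)
        have h2 : Commute (a : G) (b ^ ((j : ℕ) + 1) * (a' : G)) :=
          ((hbc _ a.2).symm.pow_right _).mul_right (haa _ _ a.2 a'.2)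
        exact h1.mul_left h2)
    have hcard : Nat.card (Set.range u) = (orderOf b - 1) * Nat.card ↥C := by
      rw [Nat.card_range_of_injective huinj, Nat.card_prod, Nat.card_eq_fintype_card,
        Fintype.card_fin]
    rw [← hcard]
    exact hS
  · -- part (ii)
    intro b hb
    set C := A ⊓ Subgroup.centralizer {b} with hCdef
    have hbc : ∀ a : G, a ∈ C → Commute b a := fun a ha =>
      (Subgroup.mem_centralizer_iff.mp ha.2 b rfl)
    have haa : ∀ a a' : G, a ∈ C → a' ∈ C → Commute a a' := fun a a' ha ha' =>
      Subgroup.mul_comm_of_mem_isMulCommutative A ha.1 ha'.1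
    constructor
    · -- |C_A(b)| ≤ n
      set v : ↥C → G := fun a => b * (a : G) with hv
      have hvinj : Function.Injective v := by
        intro a a' heq
        exact Subtype.ext (mul_left_cancel heq)
      have hS := card_le_of_pairwise_commute A B h (Set.range v)
        (by
          rintro x ⟨a, rfl⟩ hxA
          apply hb
          have : b = v a * (a : G)⁻¹ := by simp [hv]
          rw [this]
          exact mul_mem hxA (inv_mem a.2.1))
        (by
          rintro x ⟨a, rfl⟩ y ⟨a', rfl⟩
          simp only [hv]
          have h1 : Commute b (b * (a' : G)) := (Commute.refl b).mul_right (hbc _ a'.2)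
          have h2 : Commute (a : G) (b * (a' : G)) :=
            (hbc _ a.2).symm.mul_right (haa _ _ a.2 a'.2)
          exact h1.mul_left h2)
      rw [Nat.card_range_of_injective hvinj] at hS
      exact hS
    · -- orderOf b ≤ 2n
      set H := Subgroup.zpowers b with hHdef
      set K := H ⊓ A with hKdef
      have hSA : ∀ x ∈ (H : Set G) \ (A : Set G), x ∉ A := fun x hx => hx.2
      have hScomm : ∀ x ∈ (H : Set G) \ (A : Set G), ∀ y ∈ (H : Set G) \ (A : Set G),
          Commute x y := by
        rintro x ⟨hx, -⟩ y ⟨hy, -⟩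
        obtain ⟨i, rfl⟩ := Subgroup.mem_zpowers_iff.mp hx
        obtain ⟨j, rfl⟩ := Subgroup.mem_zpowers_iff.mp hy
        exact (Commute.refl b).zpow_zpow i j
      have hS := card_le_of_pairwise_commute A B h ((H : Set G) \ (A : Set G)) hSA hScomm
      -- card of S = |H| - |K|
      have hKset : (K : Set G) = (H : Set G) ∩ (A : Set G) := rfl
      have hfin : (K : Set G).Finite := Set.toFinite _
      have hdiffcard : ((H : Set G) \ (A : Set G)).ncard
          = (H : Set G).ncard - (K : Set G).ncard := by
        rw [hKset, ← Set.diff_self_inter]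
        exact Set.ncard_diff Set.inter_subset_left
      have hcards : Nat.card ((H : Set G) \ (A : Set G) : Set G)
          = Nat.card ↥H - Nat.card ↥K := by
        rw [Nat.card_coe_set_eq, hdiffcard, ← Nat.card_coe_set_eq,
          ← Nat.card_coe_set_eq]
        rfl
      have hHcard : Nat.card ↥H = orderOf b := Nat.card_zpowers b
      have hdvd : Nat.card ↥K ∣ Nat.card ↥H := Subgroup.card_dvd_of_le inf_le_left
      have hKpos : 0 < Nat.card ↥K := Nat.card_pos
      have hKlt : Nat.card ↥K < Nat.card ↥H := by
        have hbH : b ∈ H := Subgroup.mem_zpowers b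
        have hbK : b ∉ K := fun hk => hb hk.2
        have hss : (K : Set G) ⊂ (H : Set G) :=
          ⟨fun x hx => hx.1, fun hsub => hbK ⟨hbH, (hsub hbH).2⟩⟩
        have e1 : Nat.card ↥K = (K : Set G).ncard := by
          rw [← Nat.card_coe_set_eq]; rfl
        have e2 : Nat.card ↥H = (H : Set G).ncard := by
          rw [← Nat.card_coe_set_eq]; rfl
        rw [e1, e2]
        exact Set.ncard_lt_ncard hss (Set.toFinite _)
      have h2K : 2 * Nat.card ↥K ≤ Nat.card ↥H := by
        obtain ⟨m, hm⟩ := hdvd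
        have hm2 : 2 ≤ m := by
          rcases Nat.lt_or_ge m 2 with hm' | hm'
          · interval_cases m <;> omega
          · exact hm'
        calc 2 * Nat.card ↥K ≤ m * Nat.card ↥K := by
              exact Nat.mul_le_mul_right _ hm2
          _ = Nat.card ↥H := by rw [hm, Nat.mul_comm]
      rw [hcards, hHcard] at hS
      rw [hHcard] at h2K hKlt
      omega
end

section
/- Suppose a finite group G has an n-split decomposition with respect to an abelian subgroup A, let p be a prime divisor of |G|, and let P be a p-subgroup of G. If either (1) p ≥ n + 2, or (2) p² > 2n and |P| ≥ p², then P is contained in A. -/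
section Aux

variable {G : Type*} [Group G] [Finite G] {A : Subgroup G} {n : ℕ} {B : Fin n → Set G}

/-- Any set of pairwise commuting elements avoiding `A` has at most `n` elements. -/
lemma key_count (h : IsSplitDecomp A B) (S : Set G)
    (hcomm : ∀ a ∈ S, ∀ b ∈ S, Commute a b)
    (hdisj : ∀ a ∈ S, a ∉ A) : S.ncard ≤ n := by
  obtain ⟨-, hcover, -, -, -, hnc⟩ := h
  have hchoice : ∀ a : S, ∃ i, (a : G) ∈ B i := by
    intro a
    have hmem : (a : G) ∈ (A : Set G) ∪ ⋃ i, B i := by rw [hcover]; trivial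
    rcases hmem with h1 | h2
    · exact absurd h1 (hdisj a a.2)
    · simpa using h2
  choose f hf using hchoice
  have hinj : Function.Injective f := by
    intro a b hab
    by_contra hne
    have hne' : (a : G) ≠ b := fun e => hne (Subtype.ext e)
    exact hnc (f a) a (hf a) b (hab ▸ hf b) hne' (hcomm a a.2 b b.2)
  calc S.ncard = Nat.card S := (Nat.card_coe_set_eq S).symm
    _ ≤ Nat.card (Fin n) := Nat.card_le_card_of_injective f hinj
    _ = n := by simp

/-- A commutative `p`-subgroup not contained in `A` gives a strong bound. -/
lemma key_subgroup (h : IsSplitDecomp A B) {p : ℕ} (hp : p.Prime) (H : Subgroup G)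
    (hcomm : ∀ a ∈ H, ∀ b ∈ H, Commute a b) (hpH : IsPGroup p H)
    (hne : ¬ H ≤ A) :
    ∃ a : ℕ, 1 ≤ a ∧ Nat.card H = p ^ a ∧ p ^ a - p ^ (a - 1) ≤ n := by
  haveI : Fact p.Prime := ⟨hp⟩
  obtain ⟨a, ha⟩ := (IsPGroup.iff_card).mp hpH
  obtain ⟨b, hb⟩ := (IsPGroup.iff_card).mp
    (hpH.to_le (inf_le_right : A ⊓ H ≤ H))
  have hdvd : Nat.card (A ⊓ H : Subgroup G) ∣ Nat.card H :=
    Subgroup.card_dvd_of_le inf_le_right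
  have hba : b ≤ a := by
    rw [ha, hb] at hdvd
    exact (Nat.pow_dvd_pow_iff_le_right hp.one_lt).mp hdvd
  have hblt : b < a := by
    rcases lt_or_eq_of_le hba with hlt | heq
    · exact hlt
    · exfalso
      apply hne
      have hEq : A ⊓ H = H :=
        Subgroup.eq_of_le_of_card_ge inf_le_right (by rw [ha, hb, heq])
      rw [← hEq]
      exact inf_le_left
  have ha1 : 1 ≤ a := by omega
  have hsub : ((A ⊓ H : Subgroup G) : Set G) ⊆ (H : Set G) :=
    SetLike.coe_subset_coe.mpr inf_le_right
  have hS : ((H : Set G) \ A).ncard ≤ n :=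
    key_count h _ (fun x hx y hy => hcomm x hx.1 y hy.1) (fun x hx => hx.2)
  have hdiff : ((H : Set G) \ (A : Set G)) = (H : Set G) \ ((A ⊓ H : Subgroup G) : Set G) := by
    ext x
    simp only [Set.mem_diff, SetLike.mem_coe, Subgroup.mem_inf]
    tauto
  have hc1 : ((H : Set G)).ncard = p ^ a := by
    rw [← Nat.card_coe_set_eq, ← ha]
    rfl
  have hc2 : (((A ⊓ H : Subgroup G) : Set G)).ncard = p ^ b := by
    rw [← Nat.card_coe_set_eq, ← hb]
    rfl
  have hcount : ((H : Set G) \ A).ncard = p ^ a - p ^ b := by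
    rw [hdiff, Set.ncard_diff hsub, hc1, hc2]
  refine ⟨a, ha1, ha, ?_⟩
  have hple : p ^ b ≤ p ^ (a - 1) := Nat.pow_le_pow_right hp.pos (by omega)
  have := hcount ▸ hS
  omega

end Aux

theorem p_subgroup_contained_in_A {G : Type*} [Group G] [Finite G]
    (A : Subgroup G) (n : ℕ) (B : Fin n → Set G) (h : IsSplitDecomp A B)
    (p : ℕ) (hp : p.Prime) (hpG : p ∣ Nat.card G) (P : Subgroup G) (hP : IsPGroup p P)
    (hcond : n + 2 ≤ p ∨ (2 * n < p ^ 2 ∧ p ^ 2 ≤ Nat.card P)) :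
    P ≤ A := by
  haveI : Fact p.Prime := ⟨hp⟩
  intro x hx
  by_contra hxA
  have hzle : Subgroup.zpowers x ≤ P := Subgroup.zpowers_le.mpr hx
  have hzcomm : ∀ a ∈ Subgroup.zpowers x, ∀ b ∈ Subgroup.zpowers x, Commute a b := by
    intro a ha b hb
    obtain ⟨i, rfl⟩ := Subgroup.mem_zpowers_iff.mp ha
    obtain ⟨j, rfl⟩ := Subgroup.mem_zpowers_iff.mp hb
    exact (Commute.refl x).zpow_zpow i j
  have hzcentx : Subgroup.zpowers x ≤ Subgroup.centralizer {x} := by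
    intro g hg
    obtain ⟨k, rfl⟩ := Subgroup.mem_zpowers_iff.mp hg
    rw [Subgroup.mem_centralizer_iff]
    intro y hy
    rw [Set.mem_singleton_iff] at hy
    rw [hy]
    exact (Commute.refl x).zpow_right k
  rcases hcond with hcase | ⟨h2n, hcardP⟩
  · -- Case 1 : n + 2 ≤ p
    have hne : ¬ Subgroup.zpowers x ≤ A := fun hle => hxA (hle (Subgroup.mem_zpowers x))
    obtain ⟨a, ha1, hcard, hle⟩ := key_subgroup h hp _ hzcomm (hP.to_le hzle) hne
    have hq1 : 1 ≤ p ^ (a - 1) := Nat.one_le_pow _ _ hp.pos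
    have hpa : p ^ (a - 1) * p = p ^ a := by
      rw [← pow_succ, Nat.sub_add_cancel ha1]
    have h5 : p ^ a ≤ n + p ^ (a - 1) := by omega
    have h6 : p ^ (a - 1) * (n + 2) ≤ p ^ (a - 1) * p := Nat.mul_le_mul_left _ hcase
    have h7 : n ≤ p ^ (a - 1) * n := Nat.le_mul_of_pos_left n (by omega)
    clear hne
    nlinarith [h5, h6, h7, hpa, hq1]
  · -- Case 2 : 2n < p² and p² ≤ |P|
    set C : Subgroup G := P ⊓ Subgroup.centralizer {x} with hCdef
    have hxC : x ∈ C := le_inf hzle hzcentx (Subgroup.mem_zpowers x)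
    have hCle : C ≤ P := inf_le_left
    have hCcard : p ^ 2 ≤ Nat.card C := by
      by_cases hcen : P ≤ Subgroup.centralizer {x}
      · have hCP : C = P := by rw [hCdef, inf_eq_left.mpr hcen]
        rw [hCP]
        exact hcardP
      · haveI : Nontrivial (↥P) := by
          rw [← Finite.one_lt_card_iff_nontrivial]
          have h2 := hp.two_le
          clear hcen
          nlinarith [hcardP]
        set Z := Subgroup.map P.subtype (Subgroup.center ↥P) with hZdef
        have hZP : Z ≤ P := Subgroup.map_subtype_le _
        have hZcent : Z ≤ Subgroup.centralizer {x} := by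
          rintro g ⟨z, hz, rfl⟩
          rw [Subgroup.mem_centralizer_iff]
          intro y hy
          rw [Set.mem_singleton_iff] at hy
          rw [hy]
          exact congrArg Subtype.val ((Subgroup.mem_center_iff.mp hz) ⟨x, hx⟩)
        have hZcard : p ≤ Nat.card Z := by
          haveI := hP.center_nontrivial
          obtain ⟨k, hk0, hkc⟩ :=
            ((hP.to_subgroup (Subgroup.center ↥P)).nontrivial_iff_card).mp inferInstance
          have hZk : Nat.card Z = p ^ k := by
            rw [← hkc]
            exact (Nat.card_congr
              (Subgroup.equivMapOfInjective _ P.subtype P.subtype_injective).toEquiv).symm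
          rw [hZk]
          calc p = p ^ 1 := (pow_one p).symm
            _ ≤ p ^ k := Nat.pow_le_pow_right hp.pos hk0
        set W := Z ⊔ Subgroup.zpowers x with hWdef
        have hWC : W ≤ C := sup_le (le_inf hZP hZcent) (le_inf hzle hzcentx)
        have hZW : Z ≠ W := by
          intro hZW
          apply hcen
          have hxZ : x ∈ Z := hZW ▸ (le_sup_right (a := Z) (Subgroup.mem_zpowers x))
          obtain ⟨z, hz, hzx⟩ := hxZ
          intro g hg
          rw [Subgroup.mem_centralizer_iff]
          intro y hy
          rw [Set.mem_singleton_iff] at hy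
          rw [hy]
          have hcz := congrArg Subtype.val ((Subgroup.mem_center_iff.mp hz) ⟨g, hg⟩)
          simp only [Subgroup.coe_mul] at hcz
          have hzx' : (z : G) = x := hzx
          rw [hzx'] at hcz
          exact hcz.symm
        obtain ⟨zz, hzz⟩ := IsPGroup.iff_card.mp (hP.to_le (hWC.trans hCle))
        have hdvdW : Nat.card Z ∣ Nat.card W := Subgroup.card_dvd_of_le le_sup_left
        have hZltW : Nat.card Z < Nat.card W := by
          rcases lt_or_eq_of_le (Subgroup.card_le_of_le (le_sup_left : Z ≤ W)) with hlt | heq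
          · exact hlt
          · exact absurd (Subgroup.eq_of_le_of_card_ge le_sup_left heq.ge) hZW
        obtain ⟨j, hjzz, hdj⟩ := (Nat.dvd_prime_pow hp).mp (hzz ▸ hdvdW)
        have hjlt : j < zz := by
          rcases lt_or_eq_of_le hjzz with hlt | heq
          · exact hlt
          · exfalso
            rw [hdj, heq, ← hzz] at hZltW
            exact lt_irrefl _ hZltW
        have hW2 : p ^ 2 ≤ Nat.card W := by
          have h1 : p ≤ p ^ j := hdj ▸ hZcard
          calc p ^ 2 = p * p := pow_two p
            _ ≤ p ^ j * p := Nat.mul_le_mul_right p h1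
            _ = p ^ (j + 1) := (pow_succ p j).symm
            _ ≤ p ^ zz := Nat.pow_le_pow_right hp.pos hjlt
            _ = Nat.card W := hzz.symm
        exact le_trans hW2 (Subgroup.card_le_of_le hWC)
    -- find an abelian subgroup K of C of order p²
    obtain ⟨c, hc⟩ := IsPGroup.iff_card.mp (hP.to_le hCle)
    have hc2 : 2 ≤ c := by
      by_contra hlt
      push_neg at hlt
      have hle1 : p ^ c ≤ p ^ 1 := Nat.pow_le_pow_right hp.pos (by omega)
      have hple : p ^ 2 ≤ p ^ 1 := le_trans (hc ▸ hCcard) hle1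
      have := (Nat.pow_lt_pow_iff_right hp.one_lt).mpr (by omega : (1:ℕ) < 2)
      omega
    have hdvdC : p ^ 2 ∣ Nat.card C := hc ▸ pow_dvd_pow p hc2
    obtain ⟨K', hK'⟩ := Sylow.exists_subgroup_card_pow_prime p hdvdC
    set K : Subgroup G := Subgroup.map C.subtype K' with hKdef
    have hKcard : Nat.card K = p ^ 2 := by
      rw [← hK']
      exact (Nat.card_congr
        (Subgroup.equivMapOfInjective K' C.subtype C.subtype_injective).toEquiv).symm
    have hKC : K ≤ C := Subgroup.map_subtype_le K'
    have hKcomm : ∀ a ∈ K, ∀ b ∈ K, Commute a b := by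
      rintro a ⟨a', ha', rfl⟩ b ⟨b', hb', rfl⟩
      have hcomm' := IsPGroup.commutative_of_card_eq_prime_sq (G := ↥K') hK'
        ⟨a', ha'⟩ ⟨b', hb'⟩
      have h2 : a' * b' = b' * a' := congrArg Subtype.val hcomm'
      exact congrArg Subtype.val h2
    have hKA : K ≤ A := by
      by_contra hKnA
      obtain ⟨e, he1, hecard, hlen⟩ := key_subgroup h hp K hKcomm (IsPGroup.of_card hKcard) hKnA
      have he2 : e = 2 :=
        Nat.pow_right_injective hp.two_le (hecard.symm.trans hKcard)
      subst he2
      rw [show (2:ℕ) - 1 = 1 by rfl, pow_one] at hlen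
      have h9 : p ^ 2 ≤ n + p := by omega
      clear hKnA
      nlinarith [h9, h2n, hp.two_le]
    -- the coset x * K is a commuting set of size p² avoiding A
    have hKcent : K ≤ Subgroup.centralizer {x} := hKC.trans inf_le_right
    set S : Set G := (fun k => x * k) '' (K : Set G) with hSdef
    have hScomm : ∀ a ∈ S, ∀ b ∈ S, Commute a b := by
      rintro a ⟨k1, hk1, rfl⟩ b ⟨k2, hk2, rfl⟩
      have hxk1 : Commute x k1 := (Subgroup.mem_centralizer_iff.mp (hKcent hk1) x rfl)
      have hxk2 : Commute x k2 := (Subgroup.mem_centralizer_iff.mp (hKcent hk2) x rfl)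
      have h12 : Commute k1 k2 := hKcomm k1 hk1 k2 hk2
      exact ((Commute.refl x).mul_right hxk2).mul_left (hxk1.symm.mul_right h12)
    have hSdisj : ∀ a ∈ S, a ∉ A := by
      rintro a ⟨k, hk, rfl⟩ hmem
      apply hxA
      have : x = (x * k) * k⁻¹ := by group
      rw [this]
      exact A.mul_mem hmem (A.inv_mem (hKA hk))
    have hSn : S.ncard ≤ n := key_count h S hScomm hSdisj
    have hSeq : S.ncard = p ^ 2 := by
      rw [hSdef, Set.ncard_image_of_injective _ (mul_right_injective x),
        ← Nat.card_coe_set_eq]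
      exact hKcard
    omega
end

section
/- Let G be a finite Frobenius group with abelian Frobenius kernel A, i.e., A is a nontrivial proper normal abelian subgroup of G such that C_G(a) ≤ A for every nonidentity a ∈ A. Then the nontrivial cosets of A form a strict (|G:A|−1)-split decomposition of G with respect to A: no two distinct elements of any coset Ag with g ∉ A commute. If, in addition, there exists an abelian subgroup H of G with G = AH and A ∩ H = 1 (an abelian Frobenius complement), then every n-split decomposition of G with respect to A satisfies n ≥ |G:A| − 1. -/
open scoped Pointwise


lemma coset_mem_iff {G : Type*} [Group G] (A : Subgroup G) (hnorm : A.Normal) (g x : G) :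
    x * g⁻¹ ∈ A ↔ (QuotientGroup.mk x : G ⧸ A) = QuotientGroup.mk g := by
  rw [QuotientGroup.eq]
  constructor
  · intro h
    have h2 := hnorm.conj_mem _ h g⁻¹
    have h3 := A.inv_mem h2
    simpa [mul_assoc] using h3
  · intro h
    have h2 := A.inv_mem h
    have h3 := hnorm.conj_mem _ h2 g
    simpa [mul_assoc] using h3

lemma card_ne_one {α : Type*} [Finite α] (a : α) :
    Nat.card {x : α // x ≠ a} = Nat.card α - 1 := by
  classical
  have := Fintype.ofFinite α
  simp only [Nat.card_eq_fintype_card]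
  have : Fintype.card {x : α // x ≠ a} = Fintype.card α - Fintype.card {x : α // x = a} :=
    Fintype.card_subtype_compl _
  rw [this, Fintype.card_subtype_eq]

lemma noncomm_coset {G : Type*} [Group G] [Finite G]
    (A : Subgroup G) (hnorm : A.Normal)
    (hfrob : ∀ a : G, a ∈ A → a ≠ 1 → Subgroup.centralizer {a} ≤ A) :
    ∀ g : G, g ∉ A → ∀ x ∈ {x : G | x * g⁻¹ ∈ A}, ∀ y ∈ {x : G | x * g⁻¹ ∈ A},
        x ≠ y → ¬ Commute x y := by
  intro g hg x hx y hy hxy hc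
  simp only [Set.mem_setOf_eq] at hx hy
  have hxA : x ∉ A := by
    intro h
    have h2 := A.mul_mem (A.inv_mem h) hx
    have : g⁻¹ ∈ A := by simpa [mul_assoc] using h2
    exact hg (by simpa using A.inv_mem this)
  have hxyA : x * y⁻¹ ∈ A := by
    have := A.mul_mem hx (A.inv_mem hy)
    simpa [mul_assoc, mul_inv_rev] using this
  have hne1 : x * y⁻¹ ≠ 1 := by
    simp only [ne_eq, mul_inv_eq_one]
    exact hxy
  have hcx : x ∈ Subgroup.centralizer {x * y⁻¹} := by
    rw [Subgroup.mem_centralizer_iff]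
    intro h hh
    rw [Set.mem_singleton_iff] at hh
    subst hh
    exact (((Commute.refl x).mul_right hc.inv_right).symm).eq
  exact hxA (hfrob _ hxyA hne1 hcx)

theorem frobenius_split_decomposition {G : Type*} [Group G] [Finite G]
    (A : Subgroup G) (hbot : A ≠ ⊥) (htop : A ≠ ⊤) (hnorm : A.Normal)
    (hcomm : IsMulCommutative A)
    (hfrob : ∀ a : G, a ∈ A → a ≠ 1 → Subgroup.centralizer {a} ≤ A) :
    (∀ g : G, g ∉ A → ∀ x ∈ {x : G | x * g⁻¹ ∈ A}, ∀ y ∈ {x : G | x * g⁻¹ ∈ A},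
        x ≠ y → ¬ Commute x y) ∧
    (∃ B : Fin (A.index - 1) → Set G, IsStrictSplitDecomp A B ∧
        ∀ i, ∃ g : G, g ∉ A ∧ B i = {x : G | x * g⁻¹ ∈ A}) ∧
    ((∃ H : Subgroup G, IsMulCommutative H ∧ A ⊔ H = ⊤ ∧ A ⊓ H = ⊥) →
      ∀ (n : ℕ) (B : Fin n → Set G), IsSplitDecomp A B → A.index - 1 ≤ n) := by
  classical
  have hmemA : ∀ x : G, x ∈ A ↔ (QuotientGroup.mk x : G ⧸ A) = 1 := fun x =>
    (QuotientGroup.eq_one_iff x).symm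
  refine ⟨noncomm_coset A hnorm hfrob, ?_, ?_⟩
  · -- Part 2: construction
    have hcard : Nat.card {q : G ⧸ A // q ≠ 1} = A.index - 1 := by
      rw [card_ne_one]; rfl
    let e : {q : G ⧸ A // q ≠ 1} ≃ Fin (A.index - 1) := Finite.equivFinOfCardEq hcard
    set rep : Fin (A.index - 1) → G := fun i => Quotient.out ((e.symm i).1) with hrep
    have hmkrep : ∀ i, (QuotientGroup.mk (rep i) : G ⧸ A) = (e.symm i).1 := fun i =>
      Quotient.out_eq _
    have hrepA : ∀ i, rep i ∉ A := by
      intro i h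
      rw [hmemA, hmkrep] at h
      exact (e.symm i).2 h
    refine ⟨fun i => {x : G | x * (rep i)⁻¹ ∈ A}, ⟨⟨hcomm, ?_, ?_, ?_, ?_, ?_⟩, ?_⟩,
      fun i => ⟨rep i, hrepA i, rfl⟩⟩
    · -- union
      ext x
      simp only [Set.mem_union, Set.mem_iUnion, Set.mem_setOf_eq, Set.mem_univ, iff_true,
        SetLike.mem_coe]
      by_cases h : (QuotientGroup.mk x : G ⧸ A) = 1
      · exact Or.inl ((hmemA x).mpr h)
      · refine Or.inr ⟨e ⟨QuotientGroup.mk x, h⟩, ?_⟩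
        rw [coset_mem_iff A hnorm, hmkrep, Equiv.symm_apply_apply]
    · -- disjoint from A
      intro i
      rw [Set.disjoint_left]
      intro x hxA hxB
      rw [Set.mem_setOf_eq, coset_mem_iff A hnorm, hmkrep] at hxB
      rw [SetLike.mem_coe, hmemA, hxB] at hxA
      exact (e.symm i).2 hxA
    · -- pairwise disjoint
      intro i j hij
      rw [Set.disjoint_left]
      intro x hxi hxj
      rw [Set.mem_setOf_eq, coset_mem_iff A hnorm, hmkrep] at hxi hxj
      apply hij
      apply e.symm.injective
      exact Subtype.ext (hxi ▸ hxj ▸ rfl)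
    · -- nonempty
      intro i
      exact ⟨rep i, by simpa using A.one_mem⟩
    · -- noncommuting
      intro i
      exact noncomm_coset A hnorm hfrob (rep i) (hrepA i)
    · -- size ≥ 2
      intro i
      obtain ⟨a, ha1⟩ := Subgroup.ne_bot_iff_exists_ne_one.mp hbot
      have h1 : rep i ∈ {x : G | x * (rep i)⁻¹ ∈ A} := by simpa using A.one_mem
      have h2 : (a : G) * rep i ∈ {x : G | x * (rep i)⁻¹ ∈ A} := by
        simpa [Set.mem_setOf_eq, mul_assoc] using a.2
      refine (Set.one_lt_ncard_iff (Set.toFinite _)).mpr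
        ⟨(a : G) * rep i, rep i, h2, h1, ?_⟩
      intro h
      exact ha1 (OneMemClass.coe_eq_one.mp (mul_eq_right.mp h))
  · -- Part 3: lower bound
    rintro ⟨H, hHcomm, hsup, hinf⟩ n B hB
    obtain ⟨-, hcover, hdisjA, -, -, hnc⟩ := hB
    -- every nontrivial element of H lies in some B i
    have hmem : ∀ h : {h : H // h ≠ 1}, ∃ i, ((h : H) : G) ∈ B i := by
      intro h
      have hnA : ((h : H) : G) ∉ A := by
        intro hA
        have hm : ((h : H) : G) ∈ A ⊓ H := ⟨hA, SetLike.coe_mem _⟩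
        rw [hinf] at hm
        exact h.2 (Subtype.ext (by simpa using hm))
      have : ((h : H) : G) ∈ (A : Set G) ∪ ⋃ i, B i := by rw [hcover]; trivial
      rcases this with hc | hc
      · exact absurd hc hnA
      · exact Set.mem_iUnion.mp hc
    let f : {h : H // h ≠ 1} → Fin n := fun h => (hmem h).choose
    have hf : Function.Injective f := by
      intro h1 h2 heq
      have m1 := (hmem h1).choose_spec
      have m2 := (hmem h2).choose_spec
      rw [show (hmem h1).choose = f h1 from rfl, heq] at m1
      by_contra hne
      have hneG : ((h1 : H) : G) ≠ ((h2 : H) : G) := by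
        intro hh
        exact hne (Subtype.ext (Subtype.ext hh))
      have hcomm12 : Commute ((h1 : H) : G) ((h2 : H) : G) := by
        have := hHcomm.is_comm.comm (h1 : H) (h2 : H)
        exact congrArg (Subtype.val) this
      exact hnc (f h2) _ m1 _ m2 hneG hcomm12
    have hle1 : Nat.card {h : H // h ≠ 1} ≤ n := by
      have := Nat.card_le_card_of_injective f hf
      simpa using this
    have hHcard : Nat.card {h : H // h ≠ 1} = Nat.card H - 1 := card_ne_one 1
    -- index ≤ card H via surjection H → G ⧸ A
    have hsurj : Function.Surjective (fun h : H => (QuotientGroup.mk (h : G) : G ⧸ A)) := by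
      intro q
      induction q using QuotientGroup.induction_on with
      | H g =>
        have hg : g ∈ A ⊔ H := by rw [hsup]; trivial
        have hg' : g ∈ (A : Set G) * (H : Set G) := by rw [← Subgroup.normal_mul]; exact hg
        obtain ⟨a, ha, h, hh, hgh⟩ := hg'
        refine ⟨⟨h, hh⟩, ?_⟩
        show (QuotientGroup.mk h : G ⧸ A) = QuotientGroup.mk g
        rw [← hgh, QuotientGroup.mk_mul, (hmemA a).mp ha, one_mul]
    have hle2 : A.index ≤ Nat.card H := by
      have := Nat.card_le_card_of_surjective _ hsurj
      simpa [Subgroup.index] using this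
    omega
end

section
/- Let G be a finite nonabelian group and A a subgroup of G. Then G has a 1-split decomposition with respect to A (i.e., G = A ⊔ B where A is abelian and no two distinct elements of the nonempty set B commute) if and only if |A| is odd, |G : A| = 2, A is abelian, and every element of G \ A has order 2 (equivalently, G is a Frobenius group of order 2m with m odd whose Frobenius kernel is the abelian subgroup A of order m). -/
theorem one_split_decomposition_iff {G : Type*} [Group G] [Finite G]
    (hG : ¬ ∀ a b : G, Commute a b) (A : Subgroup G) :
    (∃ B : Fin 1 → Set G, IsSplitDecomp A B) ↔
      Odd (Nat.card A) ∧ A.index = 2 ∧ IsMulCommutative A ∧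
        ∀ g : G, g ∉ A → orderOf g = 2 := by
  constructor
  · rintro ⟨B, hcomm, hunion, hdisj, -, hne, hnc⟩
    -- B 0 is exactly the complement of A
    have hBsub : ∀ x ∈ B 0, x ∉ A := fun x hx hxA =>
      (hdisj 0).ne_of_mem hxA hx rfl
    have hBeq : B 0 = (A : Set G)ᶜ := by
      apply Set.eq_of_subset_of_subset
      · intro x hx; exact hBsub x hx
      · intro x hx
        have : x ∈ (A : Set G) ∪ ⋃ i, B i := hunion ▸ Set.mem_univ x
        rcases this with h | h
        · exact absurd h hx
        · obtain ⟨s, ⟨i, rfl⟩, hs⟩ := h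
          rwa [Fin.fin_one_eq_zero i] at hs
    -- every element outside A has square 1
    have hsq : ∀ g : G, g ∉ A → g * g = 1 := by
      intro g hg
      by_contra h
      have hgB : g ∈ B 0 := by rw [hBeq]; exact hg
      have hginv : g⁻¹ ∈ B 0 := by
        rw [hBeq]; intro hmem
        exact hg (by simpa using A.inv_mem hmem)
      have hne' : g ≠ g⁻¹ := by
        intro he
        exact h (by rw [← mul_inv_cancel g, ← he])
      exact hnc 0 g hgB g⁻¹ hginv hne' (Commute.inv_right (Commute.refl g))
    have hord : ∀ g : G, g ∉ A → orderOf g = 2 := by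
      intro g hg
      have h1 : g ≠ 1 := fun h => hg (h ▸ A.one_mem)
      exact orderOf_eq_prime (by rw [pow_two]; exact hsq g hg) h1
    -- a fixed element outside A
    obtain ⟨b, hb⟩ := hne 0
    have hbA : b ∉ A := hBsub b hb
    have hbsq : b * b = 1 := hsq b hbA
    -- product of two non-members lies in A
    have hprod : ∀ x y : G, x ∉ A → y ∉ A → x * y ∈ A := by
      intro x y hx hy
      by_contra hxy
      rcases eq_or_ne x y with rfl | hne'
      · exact hxy (hsq x hx ▸ A.one_mem)
      have hxB : x ∈ B 0 := by rw [hBeq]; exact hx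
      have hyB : y ∈ B 0 := by rw [hBeq]; exact hy
      apply hnc 0 x hxB y hyB hne'
      have hxyB : x * y ∈ B 0 := by rw [hBeq]; exact hxy
      have h2 : (x * y) * (x * y) = 1 := hsq _ hxy
      -- x*y = (x*y)⁻¹ = y⁻¹ * x⁻¹ = y * x
      have hx2 : x * x = 1 := hsq x hx
      have hy2 : y * y = 1 := hsq y hy
      have hxi : x⁻¹ = x := by rw [inv_eq_iff_mul_eq_one]; exact hx2
      have hyi : y⁻¹ = y := by rw [inv_eq_iff_mul_eq_one]; exact hy2
      have : x * y = y * x := by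
        have := inv_eq_of_mul_eq_one_right h2
        rw [mul_inv_rev, hxi, hyi] at this
        exact this.symm
      exact this
    -- index 2
    have hindex : A.index = 2 := by
      rw [Subgroup.index_eq_two_iff]
      refine ⟨b, fun g => ?_⟩
      by_cases hg : g ∈ A
      · refine Or.inr ⟨hg, fun h => ?_⟩
        exact hbA (by simpa using A.mul_mem (A.inv_mem hg) h)
      · exact Or.inl ⟨hprod g b hg hbA, hg⟩
    -- odd order: no element of order 2 in A
    have hodd : Odd (Nat.card A) := by
      rw [← Nat.not_even_iff_odd, even_iff_two_dvd]
      intro hdvd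
      obtain ⟨a, ha⟩ := exists_prime_orderOf_dvd_card' (G := A) 2 hdvd
      have ha2 : (a : G) * a = 1 := by
        have := pow_orderOf_eq_one a
        rw [ha, pow_two] at this
        exact_mod_cast congrArg (Subtype.val) this
      have ha1 : (a : G) ≠ 1 := by
        intro h
        have : a = 1 := Subtype.ext h
        rw [this, orderOf_one] at ha; norm_num at ha
      -- b and b * a are distinct elements of B 0 which commute
      have hbaA : b * a ∉ A := fun h => hbA (by simpa using A.mul_mem h (A.inv_mem a.2))
      have hbB : b ∈ B 0 := by rw [hBeq]; exact hbA
      have hbaB : b * a ∈ B 0 := by rw [hBeq]; exact hbaA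
      have hneq : b ≠ b * a := by
        intro h
        apply ha1
        have h' : b * 1 = b * (a : G) := by rw [mul_one]; exact h
        exact (mul_left_cancel h').symm
      apply hnc 0 b hbB (b * a) hbaB hneq
      have hsq' : (b * a) * (b * a) = 1 := hsq _ hbaA
      unfold Commute SemiconjBy
      have h1 : b * (b * a) = a := by rw [← mul_assoc, hbsq, one_mul]
      have h2 : (b * a) * b = (a : G)⁻¹ := by
        apply eq_inv_of_mul_eq_one_left
        calc ((b * (a : G)) * b) * (a : G) = (b * a) * (b * a) := by rw [mul_assoc]
        _ = 1 := hsq'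
      rw [h1, h2]
      exact (inv_eq_of_mul_eq_one_right ha2).symm
    exact ⟨hodd, hindex, hcomm, hord⟩
  · rintro ⟨hodd, hindex, hcomm, hord⟩
    refine ⟨fun _ => (A : Set G)ᶜ, hcomm, ?_, fun _ => disjoint_compl_right, ?_, ?_, ?_⟩
    · rw [Set.iUnion_const, Set.union_compl_self]
    · intro i j hij
      exact absurd (Subsingleton.elim i j) hij
    · intro i
      have hA : A ≠ ⊤ := by
        intro h
        rw [h, Subgroup.index_top] at hindex
        norm_num at hindex
      have : ∃ g : G, g ∉ A := by
        by_contra h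
        push_neg at h
        exact hA ((Subgroup.eq_top_iff' A).2 h)
      obtain ⟨g, hg⟩ := this
      exact ⟨g, hg⟩
    · intro i x hx y hy hxy hcom
      have hx' : x ∉ A := hx
      have hy' : y ∉ A := hy
      have hx2 : x * x = 1 := by
        have := pow_orderOf_eq_one x
        rwa [hord x hx', pow_two] at this
      have hy2 : y * y = 1 := by
        have := pow_orderOf_eq_one y
        rwa [hord y hy', pow_two] at this
      have hxyA : x * y ∈ A := by
        rw [Subgroup.mul_mem_iff_of_index_two hindex]
        exact iff_of_false hx' hy'
      have hxy1 : x * y ≠ 1 := by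
        intro h
        apply hxy
        have h1 : y = x⁻¹ := eq_inv_of_mul_eq_one_right h
        rw [h1, inv_eq_of_mul_eq_one_right hx2]
      have hsq : (x * y) * (x * y) = 1 := by
        calc (x * y) * (x * y) = x * (y * x) * y := by group
        _ = x * (x * y) * y := by rw [← hcom]
        _ = (x * x) * (y * y) := by group
        _ = 1 := by rw [hx2, hy2, one_mul]
      have : orderOf (⟨x * y, hxyA⟩ : A) = 2 := by
        apply orderOf_eq_prime
        · rw [pow_two]; exact Subtype.ext hsq
        · intro h; exact hxy1 (congrArg Subtype.val h)
      have hdvd : 2 ∣ Nat.card A := this ▸ orderOf_dvd_natCard _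
      rw [← Nat.not_even_iff_odd, even_iff_two_dvd] at hodd
      exact hodd hdvd
end

section
/- Let G be a finite nonabelian group of order greater than 6 containing an abelian subgroup A of index 2. Then G has a strict 2-split decomposition with respect to A if and only if |Z(G)| ≤ 2. -/
section Aux

variable {G : Type*} [Group G]

private lemma aux_inv_nmem {A : Subgroup G} {x : G} (hx : x ∉ A) : x⁻¹ ∉ A :=
  fun h => hx (by simpa using A.inv_mem h)

private lemma aux_mul_mem {A : Subgroup G} (hidx : A.index = 2) {x y : G}
    (hx : x ∉ A) (hy : y ∉ A) : x * y ∈ A := by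
  rw [Subgroup.mul_mem_iff_of_index_two hidx]
  exact iff_of_false hx hy

private lemma aux_comm {A : Subgroup G} [IsMulCommutative A] {a b : G}
    (ha : a ∈ A) (hb : b ∈ A) : Commute a b := by
  have h := Subgroup.mul_comm_of_mem_isMulCommutative (H := A) ha hb
  exact h

private lemma aux_center_le {A : Subgroup G} [hA : IsMulCommutative A]
    (hG : ¬ ∀ a b : G, Commute a b) (hidx : A.index = 2) :
    Subgroup.center G ≤ A := by
  intro z hz
  by_contra hzA
  apply hG
  have hzc : ∀ g : G, Commute g z := fun g => Subgroup.mem_center_iff.mp hz g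
  have key : ∀ g : G, g ∉ A → g * z⁻¹ ∈ A := fun g hg =>
    aux_mul_mem hidx hg (aux_inv_nmem hzA)
  have rep : ∀ g : G, g = g * z⁻¹ * z := fun g => by rw [inv_mul_cancel_right]
  intro a b
  rcases em (a ∈ A) with ha | ha <;> rcases em (b ∈ A) with hb | hb
  · exact aux_comm ha hb
  · rw [rep b]
    exact Commute.mul_right (aux_comm ha (key b hb)) (hzc a)
  · rw [rep a]
    exact Commute.mul_left (aux_comm (key a ha) hb) ((hzc b).symm)
  · rw [rep a, rep b]
    have h1 : Commute (a * z⁻¹) (b * z⁻¹) :=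
      aux_comm (key a ha) (key b hb)
    exact Commute.mul_left (h1.mul_right (hzc (a * z⁻¹)))
      (((hzc (b * z⁻¹)).symm).mul_right (Commute.refl z))

private lemma aux_commute_iff {A : Subgroup G} [hA : IsMulCommutative A]
    (hidx : A.index = 2) {x y : G} (hx : x ∉ A) (hy : y ∉ A) :
    Commute x y ↔ x⁻¹ * y ∈ Subgroup.center G := by
  constructor
  · intro hc
    have hcA : x⁻¹ * y ∈ A := aux_mul_mem hidx (aux_inv_nmem hx) hy
    have hxc : Commute x (x⁻¹ * y) := by
      show x * (x⁻¹ * y) = x⁻¹ * y * x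
      rw [mul_inv_cancel_left, mul_assoc, ← hc.eq, inv_mul_cancel_left]
    rw [Subgroup.mem_center_iff]
    intro g
    rcases em (g ∈ A) with hg | hg
    · exact aux_comm hg hcA
    · have hgx : g * x⁻¹ ∈ A := aux_mul_mem hidx hg (aux_inv_nmem hx)
      have h2 : Commute (x⁻¹ * y) (g * x⁻¹ * x) :=
        Commute.mul_right (aux_comm hcA hgx) hxc.symm
      rw [inv_mul_cancel_right] at h2
      exact h2.symm.eq
  · intro hc
    have h1 : Commute x (x⁻¹ * y) := Subgroup.mem_center_iff.mp hc x
    have hy' : x * (x⁻¹ * y) = y := mul_inv_cancel_left x y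
    exact hy' ▸ ((Commute.refl x).mul_right h1)

private lemma aux_build [Finite G] (A : Subgroup G) [hA : IsMulCommutative A] {B1 B2 : Set G}
    (hsub1 : ∀ g ∈ B1, g ∉ A) (hsub2 : ∀ g ∈ B2, g ∉ A)
    (hcov : ∀ g : G, g ∉ A → g ∈ B1 ∨ g ∈ B2)
    (hd : ∀ g ∈ B1, g ∉ B2)
    (hc1 : 2 ≤ B1.ncard) (hc2 : 2 ≤ B2.ncard)
    (ha1 : ∀ x ∈ B1, ∀ y ∈ B1, x ≠ y → ¬ Commute x y)
    (ha2 : ∀ x ∈ B2, ∀ y ∈ B2, x ≠ y → ¬ Commute x y) :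
    ∃ B : Fin 2 → Set G, IsStrictSplitDecomp A B := by
  set B : Fin 2 → Set G := fun i => if i = 0 then B1 else B2 with hBdef
  have hB0 : B 0 = B1 := if_pos rfl
  have hB1 : B 1 = B2 := if_neg (by decide)
  have fin2 : ∀ i : Fin 2, i = 0 ∨ i = 1 := by decide
  have hdisj : Disjoint B1 B2 := Set.disjoint_left.mpr fun g hg1 hg2 => hd g hg1 hg2
  refine ⟨B, ⟨hA, ?_, ?_, ?_, ?_, ?_⟩, ?_⟩
  · ext g
    simp only [Set.mem_univ, iff_true, Set.mem_union, Set.mem_iUnion]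
    rcases em (g ∈ A) with hg | hg
    · exact Or.inl hg
    · rcases hcov g hg with h | h
      · exact Or.inr ⟨0, hB0 ▸ h⟩
      · exact Or.inr ⟨1, hB1 ▸ h⟩
  · intro i
    rcases fin2 i with rfl | rfl
    · rw [hB0]; exact Set.disjoint_left.mpr fun g hg hgB => hsub1 g hgB hg
    · rw [hB1]; exact Set.disjoint_left.mpr fun g hg hgB => hsub2 g hgB hg
  · intro i j hij
    rcases fin2 i with rfl | rfl <;> rcases fin2 j with rfl | rfl
    · exact absurd rfl hij
    · rw [hB0, hB1]; exact hdisj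
    · rw [hB0, hB1]; exact hdisj.symm
    · exact absurd rfl hij
  · intro i
    rcases fin2 i with rfl | rfl
    · rw [hB0]; exact Set.nonempty_of_ncard_ne_zero (by omega)
    · rw [hB1]; exact Set.nonempty_of_ncard_ne_zero (by omega)
  · intro i
    rcases fin2 i with rfl | rfl
    · rw [hB0]; exact ha1
    · rw [hB1]; exact ha2
  · intro i
    rcases fin2 i with rfl | rfl
    · rw [hB0]; exact hc1
    · rw [hB1]; exact hc2

end Aux

theorem strict_two_split_index_two_iff {G : Type*} [Group G] [Finite G]
    (hG : ¬ ∀ a b : G, Commute a b) (hcard : 6 < Nat.card G)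
    (A : Subgroup G) (hA : IsMulCommutative A) (hidx : A.index = 2) :
    (∃ B : Fin 2 → Set G, IsStrictSplitDecomp A B) ↔
      Nat.card (Subgroup.center G) ≤ 2 := by
  haveI := hA
  have hZA : Subgroup.center G ≤ A := aux_center_le hG hidx
  have hAcard : Nat.card A * A.index = Nat.card G := A.card_mul_index
  rw [hidx] at hAcard
  have hA4 : 4 ≤ Nat.card A := by omega
  obtain ⟨x0, hx0⟩ : ∃ x : G, x ∉ A := by
    by_contra h
    push_neg at h
    have hTop : A = ⊤ := (Subgroup.eq_top_iff' A).mpr h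
    rw [hTop, Subgroup.index_top] at hidx
    omega
  constructor
  · -- decomposition implies small center
    rintro ⟨B, ⟨⟨-, hcover, -, -, -, hanti⟩, -⟩⟩
    by_contra hlt
    push_neg at hlt
    obtain ⟨z1, hz1Z, hz1⟩ : ∃ z, z ∈ Subgroup.center G ∧ z ≠ 1 := by
      have hnt : Nontrivial (Subgroup.center G) := by
        rw [← Finite.one_lt_card_iff_nontrivial]; omega
      obtain ⟨w, hw⟩ := exists_ne (1 : Subgroup.center G)
      exact ⟨(w : G), w.2, fun h => hw (Subtype.ext h)⟩
    obtain ⟨z2, hz2Z, hz2one, hz2ne⟩ :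
        ∃ z, z ∈ Subgroup.center G ∧ z ≠ 1 ∧ z ≠ z1 := by
      by_contra h
      push_neg at h
      have hsub : (Subgroup.center G : Set G) ⊆ {1, z1} := by
        intro w hw
        by_contra hw'
        simp only [Set.mem_insert_iff, Set.mem_singleton_iff, not_or] at hw'
        exact hw'.2 (h w hw hw'.1)
      have hle : Nat.card (Subgroup.center G) ≤ 2 := by
        calc Nat.card (Subgroup.center G) = (Subgroup.center G : Set G).ncard := by
              rw [← Nat.card_coe_set_eq]; rfl
          _ ≤ ({1, z1} : Set G).ncard := Set.ncard_le_ncard hsub (Set.toFinite _)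
          _ = 2 := Set.ncard_pair (Ne.symm hz1)
      omega
    have getB : ∀ g : G, g ∉ A → ∃ i, g ∈ B i := by
      intro g hg
      have hmem : g ∈ (A : Set G) ∪ ⋃ i, B i := hcover ▸ Set.mem_univ g
      rcases hmem with h | h
      · exact absurd h hg
      · exact Set.mem_iUnion.mp h
    have hmulA : ∀ z, z ∈ Subgroup.center G → z * x0 ∉ A := by
      intro z hz h
      have := A.mul_mem (A.inv_mem (hZA hz)) h
      rw [inv_mul_cancel_left] at this
      exact hx0 this
    obtain ⟨i0, hi0⟩ := getB x0 hx0
    obtain ⟨i1, hi1⟩ := getB (z1 * x0) (hmulA z1 hz1Z)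
    obtain ⟨i2, hi2⟩ := getB (z2 * x0) (hmulA z2 hz2Z)
    have hcz1 : Commute x0 (z1 * x0) :=
      Commute.mul_right (Subgroup.mem_center_iff.mp hz1Z x0) (Commute.refl x0)
    have hcz2 : Commute x0 (z2 * x0) :=
      Commute.mul_right (Subgroup.mem_center_iff.mp hz2Z x0) (Commute.refl x0)
    have hcz12 : Commute (z1 * x0) (z2 * x0) := by
      have c12 : Commute z1 z2 := Subgroup.mem_center_iff.mp hz2Z z1
      have c1x : Commute z1 x0 := (Subgroup.mem_center_iff.mp hz1Z x0).symm
      have c2x : Commute z2 x0 := (Subgroup.mem_center_iff.mp hz2Z x0).symm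
      exact Commute.mul_left (c12.mul_right c1x) ((c2x.symm).mul_right (Commute.refl x0))
    have hne1 : x0 ≠ z1 * x0 := fun h => hz1 (right_eq_mul.mp h)
    have hne2 : x0 ≠ z2 * x0 := fun h => hz2one (right_eq_mul.mp h)
    have hne12 : z1 * x0 ≠ z2 * x0 := fun h => hz2ne (mul_right_cancel h).symm
    have key : ∀ a b c : Fin 2, a = b ∨ a = c ∨ b = c := by decide
    rcases key i0 i1 i2 with h | h | h
    · exact hanti i0 x0 hi0 (z1 * x0) (h ▸ hi1) hne1 hcz1
    · exact hanti i0 x0 hi0 (z2 * x0) (h ▸ hi2) hne2 hcz2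
    · exact hanti i1 (z1 * x0) hi1 (z2 * x0) (h ▸ hi2) hne12 hcz12
  · -- small center implies decomposition
    intro hZle
    have hZpos : 0 < Nat.card (Subgroup.center G) := Nat.card_pos
    have hcases : Nat.card (Subgroup.center G) = 1 ∨ Nat.card (Subgroup.center G) = 2 := by
      omega
    -- common cardinality facts
    have hAncard : (A : Set G).ncard = Nat.card A := by
      rw [← Nat.card_coe_set_eq]; rfl
    have hcompl : (A : Set G).ncard + ((A : Set G)ᶜ).ncard = Nat.card G :=
      Set.ncard_add_ncard_compl _
    have hS4 : 4 ≤ ((A : Set G)ᶜ).ncard := by omega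
    rcases hcases with h1 | h2
    · -- trivial center
      have hbot : Subgroup.center G = ⊥ := Subgroup.card_eq_one.mp h1
      have hanti : ∀ x, x ∉ A → ∀ y, y ∉ A → x ≠ y → ¬ Commute x y := by
        intro x hx y hy hne hc
        have hmem := (aux_commute_iff hidx hx hy).mp hc
        rw [hbot, Subgroup.mem_bot] at hmem
        exact hne (inv_mul_eq_one.mp hmem)
      obtain ⟨u, hu, v, hv, huv⟩ :=
        (Set.one_lt_ncard (Set.toFinite _)).mp (by omega : 1 < ((A : Set G)ᶜ).ncard)
      have hpsub : ({u, v} : Set G) ⊆ (A : Set G)ᶜ := by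
        intro g hg
        rcases hg with rfl | hg
        · exact hu
        · exact Set.mem_singleton_iff.mp hg ▸ hv
      refine aux_build A (B1 := {u, v}) (B2 := (A : Set G)ᶜ \ {u, v}) ?_ ?_ ?_ ?_ ?_ ?_ ?_ ?_
      · intro g hg; exact hpsub hg
      · intro g hg; exact hg.1
      · intro g hg
        rcases em (g ∈ ({u, v} : Set G)) with h | h
        · exact Or.inl h
        · exact Or.inr ⟨hg, h⟩
      · intro g hg hgd; exact hgd.2 hg
      · exact le_of_eq (Set.ncard_pair huv).symm
      · rw [Set.ncard_diff hpsub (Set.toFinite _), Set.ncard_pair huv]; omega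
      · intro x hx y hy hne
        exact hanti x (hpsub hx) y (hpsub hy) hne
      · intro x hx y hy hne
        exact hanti x hx.1 y hy.1 hne
    · -- center of order two
      set π : G → G ⧸ Subgroup.center G := QuotientGroup.mk with hπdef
      have hπeq : ∀ x y : G, π x = π y ↔ x⁻¹ * y ∈ Subgroup.center G := fun x y =>
        QuotientGroup.eq
      set r : G → G := fun g => (π g).out with hrdef
      have hπr : ∀ g, π (r g) = π g := fun g => QuotientGroup.out_eq' (π g)
      have hrc : ∀ g, (r g)⁻¹ * g ∈ Subgroup.center G := fun g => (hπeq _ _).mp (hπr g)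
      have hreq : ∀ x y, π x = π y → r x = r y := by
        intro x y h
        show (π x).out = (π y).out
        rw [h]
      have hrA : ∀ g, g ∉ A → r g ∉ A := by
        intro g hg hrg
        have := A.mul_mem hrg (hZA (hrc g))
        rw [mul_inv_cancel_left] at this
        exact hg this
      have hcomm : ∀ x, x ∉ A → ∀ y, y ∉ A → Commute x y → π x = π y := fun x hx y hy hc =>
        (hπeq x y).mpr ((aux_commute_iff hidx hx hy).mp hc)
      have ha1 : ∀ x ∈ {g | g ∉ A ∧ r g = g}, ∀ y ∈ {g | g ∉ A ∧ r g = g},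
          x ≠ y → ¬ Commute x y := by
        intro x hx y hy hne hc
        exact hne (by rw [← hx.2, ← hy.2]; exact hreq x y (hcomm x hx.1 y hy.1 hc))
      have ha2 : ∀ x ∈ {g | g ∉ A ∧ r g ≠ g}, ∀ y ∈ {g | g ∉ A ∧ r g ≠ g},
          x ≠ y → ¬ Commute x y := by
        intro x hx y hy hne hc
        have hrxy : r x = r y := hreq x y (hcomm x hx.1 y hy.1 hc)
        have hc1 : (r x)⁻¹ * x ∈ Subgroup.center G := hrc x
        have hc2 : (r x)⁻¹ * y ∈ Subgroup.center G := by rw [hrxy]; exact hrc y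
        have hc1ne : (r x)⁻¹ * x ≠ 1 := fun h => hx.2 (inv_mul_eq_one.mp h)
        have hc2ne : (r x)⁻¹ * y ≠ 1 := fun h => hy.2 (by rw [← hrxy]; exact inv_mul_eq_one.mp h)
        have hc12 : (r x)⁻¹ * x ≠ (r x)⁻¹ * y := fun h => hne (mul_left_cancel h)
        have hsub : ({1, (r x)⁻¹ * x, (r x)⁻¹ * y} : Set G) ⊆ (Subgroup.center G : Set G) := by
          intro g hg
          rcases hg with rfl | hg
          · exact (Subgroup.center G).one_mem
          rcases hg with rfl | hg
          · exact hc1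
          · exact Set.mem_singleton_iff.mp hg ▸ hc2
        have h3 : ({1, (r x)⁻¹ * x, (r x)⁻¹ * y} : Set G).ncard = 3 := by
          rw [Set.ncard_insert_of_notMem ?_ (Set.toFinite _), Set.ncard_pair hc12]
          intro h
          rcases h with h | h
          · exact hc1ne h.symm
          · exact hc2ne (Set.mem_singleton_iff.mp h).symm
        have hle : ({1, (r x)⁻¹ * x, (r x)⁻¹ * y} : Set G).ncard ≤
            (Subgroup.center G : Set G).ncard := Set.ncard_le_ncard hsub (Set.toFinite _)
        have hZn : (Subgroup.center G : Set G).ncard = 2 := by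
          rw [← Nat.card_coe_set_eq]; exact h2
        omega
      obtain ⟨a, haA, haZ⟩ : ∃ a, a ∈ A ∧ a ∉ Subgroup.center G := by
        by_contra h
        push_neg at h
        have hle : Nat.card A ≤ Nat.card (Subgroup.center G) :=
          Subgroup.card_le_of_le fun x hx => h x hx
        omega
      obtain ⟨z, hzZ, hzone⟩ : ∃ z, z ∈ Subgroup.center G ∧ z ≠ 1 := by
        have hnt : Nontrivial (Subgroup.center G) := by
          rw [← Finite.one_lt_card_iff_nontrivial]; omega
        obtain ⟨w, hw⟩ := exists_ne (1 : Subgroup.center G)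
        exact ⟨(w : G), w.2, fun h => hw (Subtype.ext h)⟩
      have hax0 : a * x0 ∉ A := by
        intro h
        have := A.mul_mem (A.inv_mem haA) h
        rw [inv_mul_cancel_left] at this
        exact hx0 this
      have hg1A : r x0 ∉ A := hrA x0 hx0
      have hg2A : r (a * x0) ∉ A := hrA _ hax0
      have hg1B1 : r x0 ∈ {g | g ∉ A ∧ r g = g} := ⟨hg1A, hreq _ _ (hπr x0)⟩
      have hg2B1 : r (a * x0) ∈ {g | g ∉ A ∧ r g = g} := ⟨hg2A, hreq _ _ (hπr (a * x0))⟩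
      have hg12 : r x0 ≠ r (a * x0) := by
        intro h
        have hπ2 : π x0 = π (a * x0) := by
          rw [← hπr x0, ← hπr (a * x0)]
          exact congrArg π h
        have hmem := (hπeq _ _).mp hπ2
        have hn : (Subgroup.center G).Normal := inferInstance
        have hconj := hn.conj_mem _ hmem x0
        rw [mul_inv_cancel_left, mul_inv_cancel_right] at hconj
        exact haZ hconj
      have hc1 : 2 ≤ ({g | g ∉ A ∧ r g = g} : Set G).ncard :=
        (Set.one_lt_ncard (Set.toFinite _)).mpr
          ⟨r x0, hg1B1, r (a * x0), hg2B1, hg12⟩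
      have hzmul : ∀ g, g ∈ {g | g ∉ A ∧ r g = g} → z * g ∈ {g | g ∉ A ∧ r g ≠ g} := by
        intro g hg
        have hzgA : z * g ∉ A := by
          intro h
          have := A.mul_mem (A.inv_mem (hZA hzZ)) h
          rw [inv_mul_cancel_left] at this
          exact hg.1 this
        have hmem : (z * g)⁻¹ * g ∈ Subgroup.center G := by
          have hn : (Subgroup.center G).Normal := inferInstance
          have hz' : z⁻¹ ∈ Subgroup.center G := (Subgroup.center G).inv_mem hzZ
          have hconj := hn.conj_mem _ hz' g⁻¹
          rw [inv_inv] at hconj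
          rw [mul_inv_rev]
          exact hconj
        have hπzg : π (z * g) = π g := ((hπeq _ _).mpr hmem).symm.symm
        refine ⟨hzgA, ?_⟩
        rw [hreq _ _ hπzg, hg.2]
        intro h
        exact hzone (right_eq_mul.mp h)
      have hz1B2 := hzmul _ hg1B1
      have hz2B2 := hzmul _ hg2B1
      have hzne : z * r x0 ≠ z * r (a * x0) := fun h => hg12 (mul_left_cancel h)
      have hc2 : 2 ≤ ({g | g ∉ A ∧ r g ≠ g} : Set G).ncard :=
        (Set.one_lt_ncard (Set.toFinite _)).mpr
          ⟨z * r x0, hz1B2, z * r (a * x0), hz2B2, hzne⟩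
      refine aux_build A (B1 := {g | g ∉ A ∧ r g = g}) (B2 := {g | g ∉ A ∧ r g ≠ g})
        ?_ ?_ ?_ ?_ hc1 hc2 ha1 ha2
      · intro g hg; exact hg.1
      · intro g hg; exact hg.1
      · intro g hg
        rcases em (r g = g) with h | h
        · exact Or.inl ⟨hg, h⟩
        · exact Or.inr ⟨hg, h⟩
      · intro g hg hg2; exact hg2.2 hg.2
end

section
/- Let G be a finite group with a strict 2-split decomposition with respect to an abelian subgroup A. If G is not isomorphic to the symmetric group S_3, G is not isomorphic to the dihedral group of order 10, and it is not the case that G is isomorphic to the dihedral group of order 8 or to the quaternion group of order 8 with |A| = 4, then G has a strict 3-split decomposition with respect to the same subgroup A. -/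
set_option linter.unusedSectionVars false
set_option linter.unreachableTactic false
set_option linter.unusedTactic false
set_option maxHeartbeats 1000000


namespace SplitProofAux

open Subgroup

variable {G : Type*} [Group G]

lemma commute_of_gen {g : G} (hg : ∀ a : G, a ∈ Subgroup.zpowers g) (u v : G) : Commute u v := by
  obtain ⟨a, ha⟩ := Subgroup.mem_zpowers_iff.mp (hg u)
  obtain ⟨b, hb⟩ := Subgroup.mem_zpowers_iff.mp (hg v)
  rw [← ha, ← hb]
  exact (Commute.refl g).zpow_zpow a b

lemma commute_of_closure_pair {x y : G} (hgen : Subgroup.closure {x, y} = ⊤)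
    (hxy : Commute x y) (u v : G) : Commute u v := by
  have key : ∀ g : G, Commute x g ∧ Commute y g := by
    intro g
    have hle : Subgroup.closure {x, y} ≤ Subgroup.centralizer {x, y} := by
      apply (Subgroup.closure_le _).2
      rintro z hz
      simp only [SetLike.mem_coe, Subgroup.mem_centralizer_iff]
      rintro m (rfl | rfl) <;> rcases hz with rfl | rfl
      · rfl
      · exact hxy
      · exact hxy.symm
      · rfl
    have hg : g ∈ Subgroup.centralizer {x, y} := hle (hgen ▸ Subgroup.mem_top g)
    rw [Subgroup.mem_centralizer_iff] at hg
    exact ⟨hg x (by simp), hg y (by simp)⟩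
  have h2 : Subgroup.closure {x, y} ≤ Subgroup.centralizer {u} := by
    apply (Subgroup.closure_le _).2
    rintro z hz
    simp only [SetLike.mem_coe, Subgroup.mem_centralizer_iff]
    rintro m rfl
    rcases hz with rfl | rfl
    · exact (key m).1.symm
    · exact (key m).2.symm
  have hv : v ∈ Subgroup.centralizer {u} := h2 (hgen ▸ Subgroup.mem_top v)
  rw [Subgroup.mem_centralizer_iff] at hv
  exact hv u (by simp)

/-- extract a small power representative from membership in `zpowers`. -/
lemma exists_pow_eq_of_mem_zpowers {x g : G} (hord : 0 < orderOf x)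
    (hg : g ∈ Subgroup.zpowers x) : ∃ m : ℕ, m < orderOf x ∧ x ^ m = g := by
  obtain ⟨k, hk⟩ := Subgroup.mem_zpowers_iff.mp hg
  have horder : (x : G) ^ (orderOf x : ℤ) = 1 := by
    rw [zpow_natCast, pow_orderOf_eq_one]
  refine ⟨(k % (orderOf x : ℤ)).toNat, ?_, ?_⟩
  · have h1 : k % (orderOf x : ℤ) < (orderOf x : ℤ) :=
      Int.emod_lt_of_pos k (by exact_mod_cast hord)
    omega
  · have h0 : (0 : ℤ) ≤ k % (orderOf x : ℤ) :=
      Int.emod_nonneg k (by exact_mod_cast hord.ne')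
    have : x ^ ((k % (orderOf x : ℤ)).toNat : ℤ) = x ^ k := by
      rw [Int.toNat_of_nonneg h0]
      conv_rhs => rw [← Int.emod_add_mul_ediv k (orderOf x : ℤ)]
      rw [zpow_add, zpow_mul, horder, one_zpow, mul_one]
    rw [← zpow_natCast, this, hk]





variable {G : Type*} [Group G]

section lift
variable [Finite G] {n : ℕ} [NeZero n] {x y : G}

/-- Powers of `x` indexed by `ZMod n`, given `orderOf x = n`. -/
private def phi (x : G) (i : ZMod n) : G := x ^ i.val

lemma phi_add (hx : orderOf x = n) (i j : ZMod n) :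
    phi x (i + j) = phi x i * phi x j := by
  unfold phi
  have h : (i.val + j.val) % n = (i.val + j.val) % orderOf x := by rw [hx]
  rw [ZMod.val_add, h, pow_mod_orderOf, pow_add]

lemma phi_zero : phi x (0 : ZMod n) = 1 := by
  unfold phi; rw [ZMod.val_zero, pow_zero]

lemma phi_neg (hx : orderOf x = n) (i : ZMod n) : phi x (-i) = (phi x i)⁻¹ := by
  apply eq_inv_of_mul_eq_one_left
  rw [← phi_add hx, neg_add_cancel, phi_zero]

lemma y_phi (hx : orderOf x = n) (hconj : y * x = x⁻¹ * y) (i : ZMod n) :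
    y * phi x i = phi x (-i) * y := by
  rw [phi_neg hx]
  show y * x ^ i.val = (x ^ i.val)⁻¹ * y
  induction i.val with
  | zero => simp
  | succ k ih =>
      calc y * x ^ (k + 1) = y * x ^ k * x := by rw [pow_succ, mul_assoc]
        _ = (x ^ k)⁻¹ * (y * x) := by rw [ih, mul_assoc]
        _ = (x ^ k)⁻¹ * (x⁻¹ * y) := by rw [hconj]
        _ = (x ^ (k + 1))⁻¹ * y := by
              rw [pow_succ' x k, mul_inv_rev, mul_assoc]

lemma phi_y (hx : orderOf x = n) (hconj : y * x = x⁻¹ * y) (i : ZMod n) :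
    phi x i * y = y * phi x (-i) := by
  rw [y_phi hx hconj, neg_neg]

lemma dihedral_iso (hx : orderOf x = n) (hy2 : y * y = 1) (hconj : y * x = x⁻¹ * y)
    (hy : y ∉ Subgroup.zpowers x) (hcard : Nat.card G = 2 * n) :
    Nonempty (G ≃* DihedralGroup n) := by
  classical
  let f : DihedralGroup n → G := fun d =>
    match d with
    | DihedralGroup.r i => phi x i
    | DihedralGroup.sr i => y * phi x i
  have hmul : ∀ a b : DihedralGroup n, f (a * b) = f a * f b := by
    rintro (i | i) (j | j)
    · show phi x (i + j) = phi x i * phi x j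
      exact phi_add hx i j
    · show y * phi x (j - i) = phi x i * (y * phi x j)
      rw [← mul_assoc, phi_y hx hconj, mul_assoc, ← phi_add hx]
      congr 2
      ring
    · show y * phi x (i + j) = y * phi x i * phi x j
      rw [mul_assoc, ← phi_add hx]
    · show phi x (j - i) = y * phi x i * (y * phi x j)
      rw [mul_assoc, ← mul_assoc (phi x i), phi_y hx hconj, ← mul_assoc, ← mul_assoc,
        hy2, one_mul, ← phi_add hx]
      congr 1
      ring
  let F : DihedralGroup n →* G := MonoidHom.mk' f hmul
  have hinj : Function.Injective F := by
    rw [injective_iff_map_eq_one]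
    rintro (i | i) hfi
    · have : x ^ i.val = 1 := hfi
      have hdvd : orderOf x ∣ i.val := orderOf_dvd_of_pow_eq_one this
      rw [hx] at hdvd
      have hlt : i.val < n := ZMod.val_lt i
      have : i.val = 0 := Nat.eq_zero_of_dvd_of_lt hdvd hlt
      rw [DihedralGroup.one_def]
      congr 1
      exact (ZMod.val_eq_zero i).mp this
    · exfalso
      apply hy
      have : y = (x ^ i.val)⁻¹ := by
        have h' : y * x ^ i.val = 1 := hfi
        exact eq_inv_of_mul_eq_one_left h'
      rw [this]
      exact Subgroup.inv_mem _ (Subgroup.pow_mem _ (Subgroup.mem_zpowers x) _)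
  have hbij : Function.Bijective F := by
    rw [Nat.bijective_iff_injective_and_card]
    refine ⟨hinj, ?_⟩
    rw [Nat.card_eq_fintype_card, DihedralGroup.card, hcard]
  exact ⟨(MulEquiv.ofBijective F hbij).symm⟩

end lift

lemma quaternion_iso [Finite G] {x y : G} (hx : orderOf x = 4) (hy2 : y * y = x ^ 2)
    (hconj : y * x = x⁻¹ * y) (hy : y ∉ Subgroup.zpowers x) (hcard : Nat.card G = 8) :
    Nonempty (G ≃* QuaternionGroup 2) := by
  classical
  have hx' : orderOf x = 2 * 2 := hx
  let f : QuaternionGroup 2 → G := fun d =>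
    match d with
    | QuaternionGroup.a i => phi x i
    | QuaternionGroup.xa i => y * phi x i
  have hphin : phi x ((2 : ℕ) : ZMod (2 * 2)) = x ^ 2 := by
    show x ^ (((2 : ℕ) : ZMod (2 * 2))).val = x ^ 2
    congr 1
  have hmul : ∀ a b : QuaternionGroup 2, f (a * b) = f a * f b := by
    rintro (i | i) (j | j)
    · show phi x (i + j) = phi x i * phi x j
      exact phi_add hx' i j
    · show y * phi x (j - i) = phi x i * (y * phi x j)
      rw [← mul_assoc, phi_y hx' hconj, mul_assoc, ← phi_add hx']
      congr 2
      ring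
    · show y * phi x (i + j) = y * phi x i * phi x j
      rw [mul_assoc, ← phi_add hx']
    · show phi x (((2 : ℕ) : ZMod (2 * 2)) + j - i) = y * phi x i * (y * phi x j)
      rw [mul_assoc, ← mul_assoc (phi x i), phi_y hx' hconj, ← mul_assoc, ← mul_assoc,
        hy2, ← hphin, ← phi_add hx', ← phi_add hx']
      congr 1
      ring
  let F : QuaternionGroup 2 →* G := MonoidHom.mk' f hmul
  have hinj : Function.Injective F := by
    rw [injective_iff_map_eq_one]
    rintro (i | i) hfi
    · have : x ^ i.val = 1 := hfi
      have hdvd : orderOf x ∣ i.val := orderOf_dvd_of_pow_eq_one this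
      rw [hx] at hdvd
      have hlt : i.val < 2 * 2 := ZMod.val_lt i
      have hz : i.val = 0 := by omega
      show QuaternionGroup.a i = QuaternionGroup.a 0
      congr 1
      exact (ZMod.val_eq_zero i).mp hz
    · exfalso
      apply hy
      have h' : y * x ^ i.val = 1 := hfi
      rw [eq_inv_of_mul_eq_one_left h']
      exact Subgroup.inv_mem _ (Subgroup.pow_mem _ (Subgroup.mem_zpowers x) _)
  have hbij : Function.Bijective F := by
    rw [Nat.bijective_iff_injective_and_card]
    refine ⟨hinj, ?_⟩
    rw [Nat.card_eq_fintype_card, QuaternionGroup.card, hcard]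
  exact ⟨(MulEquiv.ofBijective F hbij).symm⟩


section Glue
variable {G : Type*} [Group G] [Finite G]

lemma closure_pair_top {x y : G} {c : ℕ} (hcard : Nat.card G = 2 * c)
    (hx : Nat.card (Subgroup.zpowers x) = c) (hy : y ∉ Subgroup.zpowers x) :
    Subgroup.closure {x, y} = ⊤ := by
  have hcpos : 0 < c := by
    rcases Nat.eq_zero_or_pos c with h | h
    · exfalso; have := Nat.card_pos (α := G); omega
    · exact h
  set K := Subgroup.closure ({x, y} : Set G) with hK
  have hxK : Subgroup.zpowers x ≤ K :=
    Subgroup.zpowers_le.2 (Subgroup.subset_closure (by simp))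
  have hyK : y ∈ K := Subgroup.subset_closure (by simp)
  have h1 : c ∣ Nat.card K := hx ▸ Subgroup.card_dvd_of_le hxK
  have h2 : Nat.card K ∣ 2 * c := hcard ▸ Subgroup.card_subgroup_dvd_card K
  have hne : Nat.card K ≠ c := by
    intro hKc
    have heq : Subgroup.zpowers x = K :=
      Subgroup.eq_of_le_of_card_ge hxK (by omega)
    exact hy (heq ▸ hyK)
  obtain ⟨t, ht⟩ := h1
  have ht2 : t ∣ 2 := by
    have : c * t ∣ c * 2 := by rw [← ht, mul_comm c 2]; exact h2
    exact (mul_dvd_mul_iff_left hcpos.ne').mp this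
  have : t = 1 ∨ t = 2 := (Nat.prime_two).eq_one_or_self_of_dvd t ht2
  have hKcard : Nat.card K = 2 * c := by
    rcases this with rfl | rfl
    · omega
    · omega
  exact Subgroup.eq_top_of_card_eq K (by rw [hKcard, hcard])

/-- Key structure lemma: in a group of order `2n` with `x` of order `n` and `y ∉ ⟨x⟩`,
`y * x * y⁻¹ = x ^ m` for some `m < n`; moreover `y * y ∈ ⟨x⟩`. -/
lemma conj_mem_zpowers {x y : G} {n : ℕ} (hx : orderOf x = n) (hn : 0 < n)
    (hcard : Nat.card G = 2 * n) (hy : y ∉ Subgroup.zpowers x) :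
    (∃ m : ℕ, m < n ∧ x ^ m = y * x * y⁻¹) ∧ y * y ∈ Subgroup.zpowers x := by
  have hcardH : Nat.card (Subgroup.zpowers x) = n := by rw [Nat.card_zpowers, hx]
  have hidx : (Subgroup.zpowers x).index = 2 := by
    have h := Subgroup.card_mul_index (Subgroup.zpowers x)
    rw [hcardH, hcard] at h
    have := Nat.eq_of_mul_eq_mul_left hn (by omega : n * (Subgroup.zpowers x).index = n * 2)
    omega
  have hyx : y * x ∉ Subgroup.zpowers x := by
    intro hmem
    have h2 : (y * x) * x⁻¹ ∈ Subgroup.zpowers x :=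
      Subgroup.mul_mem _ hmem (Subgroup.inv_mem _ (Subgroup.mem_zpowers x))
    exact hy (by simpa using h2)
  have hyi : y⁻¹ ∉ Subgroup.zpowers x := fun h => hy (by simpa using Subgroup.inv_mem _ h)
  have hmem : y * x * y⁻¹ ∈ Subgroup.zpowers x :=
    (Subgroup.mul_mem_iff_of_index_two hidx).mpr (iff_of_false hyx hyi)
  obtain ⟨m, hm, hme⟩ := exists_pow_eq_of_mem_zpowers (hx ▸ hn) hmem
  exact ⟨⟨m, hx ▸ hm, hme⟩, Subgroup.mul_self_mem_of_index_two hidx y⟩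

/-- A nonabelian group of order `2p` (`p` odd prime) is dihedral. -/
lemma dihedral_of_card_two_mul_prime {p : ℕ} (hp : p.Prime) (hp2 : p ≠ 2)
    (hcard : Nat.card G = 2 * p) {u v : G} (huv : ¬ Commute u v) :
    Nonempty (G ≃* DihedralGroup p) := by
  haveI : Fact p.Prime := ⟨hp⟩
  haveI : NeZero p := ⟨hp.pos.ne'⟩
  obtain ⟨x, hx⟩ := exists_prime_orderOf_dvd_card' p (by rw [hcard]; exact dvd_mul_left p 2)
  obtain ⟨y, hy⟩ := exists_prime_orderOf_dvd_card' 2 (by rw [hcard]; exact dvd_mul_right 2 p)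
  have hyy : y * y = 1 := by
    have := pow_orderOf_eq_one y
    rwa [hy, pow_two] at this
  have hynot : y ∉ Subgroup.zpowers x := by
    intro hmem
    have hdvd := orderOf_dvd_of_mem_zpowers hmem
    rw [hx, hy] at hdvd
    exact hp2 ((Nat.prime_dvd_prime_iff_eq Nat.prime_two hp).mp hdvd).symm
  obtain ⟨⟨m, hmlt, hme⟩, -⟩ := conj_mem_zpowers hx hp.pos hcard hynot
  have hmpos : 0 < m := by
    rcases Nat.eq_zero_or_pos m with rfl | h
    · exfalso
      have hx1 : x = 1 := by
        have h0 : (1 : G) = y * x * y⁻¹ := by simpa using hme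
        have h1 : y⁻¹ * 1 * y = y⁻¹ * (y * x * y⁻¹) * y := by rw [h0]
        have h2 : y⁻¹ * (y * x * y⁻¹) * y = x := by group
        rw [h2] at h1; simpa using h1.symm
      rw [hx1, orderOf_one] at hx
      exact hp.one_lt.ne hx
    · exact h
  -- conj squared: x = x ^ (m * m)
  have hsq : x ^ (m * m) = x := by
    have e1 : y * x ^ m * y⁻¹ = x ^ (m * m) := by
      rw [← conj_pow, ← hme, ← pow_mul, mul_comm m m]
    have e2 : y * (y * x * y⁻¹) * y⁻¹ = x := by
      have : y * (y * x * y⁻¹) * y⁻¹ = (y * y) * x * ((y * y)⁻¹) := by group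
      rw [this, hyy]; simp
    rw [← e1, hme]
    exact e2
  have hmoddvd : p ∣ m * m - 1 := by
    have hmod := pow_eq_pow_iff_modEq.mp (by rw [hsq, pow_one] : x ^ (m * m) = x ^ 1)
    rw [hx] at hmod
    exact (Nat.modEq_iff_dvd' (by nlinarith)).mp hmod.symm
  have hm1 : m = 1 ∨ m = p - 1 := by
    have hdvd : p ∣ (m - 1) * (m + 1) := by
      have heq : (m - 1) * (m + 1) = m * m - 1 := by
        cases m with
        | zero => omega
        | succ k =>
            have h1 : (k + 1) * (k + 1) = k * (k + 1 + 1) + 1 := by ring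
            simp only [Nat.succ_sub_one]
            omega
      rw [heq]; exact hmoddvd
    rcases (hp.dvd_mul.mp hdvd) with h | h
    · left
      have hlt : m - 1 < p := by omega
      have := Nat.eq_zero_of_dvd_of_lt h hlt
      omega
    · right
      have := Nat.le_of_dvd (by omega) h
      omega
  rcases hm1 with rfl | hmeq
  · -- commute case: contradiction
    exfalso
    have hcomm : Commute x y := by
      have h0 : x = y * x * y⁻¹ := by rw [← hme, pow_one]
      have h2 : x * y = y * x * y⁻¹ * y := congrArg (· * y) h0
      rw [inv_mul_cancel_right] at h2
      exact h2
    exact huv (commute_of_closure_pair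
      (closure_pair_top hcard (by rw [Nat.card_zpowers, hx]) hynot) hcomm u v)
  · -- dihedral case
    have hconj : y * x = x⁻¹ * y := by
      have hxp : x ^ p = 1 := by rw [← hx]; exact pow_orderOf_eq_one x
      have hinv : x ^ (p - 1) = x⁻¹ := by
        apply eq_inv_of_mul_eq_one_left
        rw [← pow_succ]
        have : p - 1 + 1 = p := by omega
        rw [this, hxp]
      have : y * x * y⁻¹ = x⁻¹ := by rw [← hme, hmeq, hinv]
      calc y * x = y * x * y⁻¹ * y := by group
        _ = x⁻¹ * y := by rw [this]
  
    exact dihedral_iso hx hyy hconj hynot hcard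

end Glue
section Glue2
variable {G : Type*} [Group G] [Finite G]

lemma order8_class (hcard : Nat.card G = 8) {u v : G} (huv : ¬ Commute u v) :
    Nonempty (G ≃* DihedralGroup 4) ∨ Nonempty (G ≃* QuaternionGroup 2) := by
  have horder : ∀ g : G, orderOf g ∣ 8 := fun g => hcard ▸ orderOf_dvd_natCard g
  have h8 : ∀ g : G, orderOf g ≠ 8 := by
    intro g hg
    have htop : Subgroup.zpowers g = ⊤ :=
      Subgroup.eq_top_of_card_eq _ (by rw [Nat.card_zpowers, hg, hcard])
    exact huv (commute_of_gen (fun a => htop.symm ▸ Subgroup.mem_top a) u v)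
  have hx4 : ∃ x : G, orderOf x = 4 := by
    by_contra hno
    push_neg at hno
    have hsq : ∀ g : G, g * g = 1 := by
      intro g
      have hd := horder g
      have h4 := hno g
      have h8' := h8 g
      have hle : orderOf g ≤ 8 := Nat.le_of_dvd (by norm_num) hd
      have hdvd2 : orderOf g ∣ 2 := by
        interval_cases h : (orderOf g) <;> revert h4 h8' hd <;> decide
      have := orderOf_dvd_iff_pow_eq_one.mp hdvd2
      rwa [pow_two] at this
    apply huv
    have hinv : ∀ g : G, g⁻¹ = g := fun g => inv_eq_of_mul_eq_one_right (hsq g)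
    have h2 : (u * v)⁻¹ = v⁻¹ * u⁻¹ := mul_inv_rev u v
    rw [hinv (u * v), hinv v, hinv u] at h2
    exact h2
  obtain ⟨x, hx⟩ := hx4
  have hy : ∃ y : G, y ∉ Subgroup.zpowers x := by
    by_contra hall
    push_neg at hall
    have htop : Subgroup.zpowers x = ⊤ := (Subgroup.eq_top_iff' _).2 hall
    have : Nat.card (Subgroup.zpowers x) = 8 := by rw [htop, Subgroup.card_top, hcard]
    rw [Nat.card_zpowers, hx] at this
    omega
  obtain ⟨y, hy⟩ := hy
  obtain ⟨⟨m, hmlt, hme⟩, hyy⟩ := conj_mem_zpowers hx (by norm_num) (by omega) hy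
  -- m ∈ {0,1,2,3}; rule out 0, 2; m = 1 means commuting
  have hx2 : x ^ 2 ≠ 1 := by
    intro h
    have := orderOf_dvd_of_pow_eq_one h
    rw [hx] at this
    omega
  have hconj : y * x = x⁻¹ * y := by
    have hm3 : m = 3 := by
      interval_cases m
      · exfalso
        have h0 : (1 : G) = y * x * y⁻¹ := by simpa using hme
        have h1 : y⁻¹ * 1 * y = y⁻¹ * (y * x * y⁻¹) * y := by rw [h0]
        have h2 : y⁻¹ * (y * x * y⁻¹) * y = x := by group
        rw [h2] at h1
        have hx1 : x = 1 := by simpa using h1.symm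
        rw [hx1, orderOf_one] at hx
        omega
      · -- m = 1 : commuting, contradiction
        exfalso
        have h0 : x = y * x * y⁻¹ := by rw [← hme, pow_one]
        have h2 : x * y = y * x * y⁻¹ * y := congrArg (· * y) h0
        rw [inv_mul_cancel_right] at h2
        exact huv (commute_of_closure_pair
          (closure_pair_top (c := 4) (by omega) (by rw [Nat.card_zpowers, hx]) hy) h2 u v)
      · -- m = 2 : x² central-ish, contradiction with order
        exfalso
        apply hx2
        have e1 : y * x ^ 2 * y⁻¹ = (x ^ 2) ^ 2 := by
          rw [← conj_pow, ← hme, ← pow_mul]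
        have e2 : (x ^ 2) ^ 2 = 1 := by
          have h4 : x ^ 4 = 1 := by rw [← hx]; exact pow_orderOf_eq_one x
          rw [← pow_mul]
          norm_num
          exact h4
        have e3 : y * x ^ 2 * y⁻¹ = 1 := e1.trans e2
        have e4 : y⁻¹ * (y * x ^ 2 * y⁻¹) * y = y⁻¹ * 1 * y := by rw [e3]
        have e5 : y⁻¹ * (y * x ^ 2 * y⁻¹) * y = x ^ 2 := by group
        rw [e5] at e4
        simpa using e4
      · rfl
    have hinv : x ^ 3 = x⁻¹ := by
      apply eq_inv_of_mul_eq_one_left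
      have h4 : x ^ 4 = 1 := by rw [← hx]; exact pow_orderOf_eq_one x
      rw [← pow_succ]
      norm_num
      exact h4
    have h0 : y * x * y⁻¹ = x⁻¹ := by rw [← hme, hm3, hinv]
    have h2 : y * x * y⁻¹ * y = x⁻¹ * y := congrArg (· * y) h0
    rwa [inv_mul_cancel_right] at h2
  -- y * y = x ^ k with k ∈ {0, 2}
  obtain ⟨k, hklt, hke⟩ := exists_pow_eq_of_mem_zpowers (by rw [hx]; norm_num) hyy
  rw [hx] at hklt
  have hxk : x ^ k * x ^ k = 1 := by
    -- y * (y*y) * y⁻¹ = y*y  and  y * x^k * y⁻¹ = (x^k)⁻¹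
    have e1 : y * (y * y) * y⁻¹ = y * y := by group
    have e2 : y * x ^ k * y⁻¹ = (x ^ k)⁻¹ := by
      have : y * x * y⁻¹ = x⁻¹ := by
        have h2 : y * x * y⁻¹ = x⁻¹ * y * y⁻¹ := by rw [hconj]
        simpa using h2
      rw [← conj_pow, this, inv_pow]
    rw [← hke] at e1
    rw [e2] at e1
    have h2 : x ^ k * x ^ k = x ^ k * (x ^ k)⁻¹ := congrArg (x ^ k * ·) e1.symm
    simpa using h2
  have hk02 : k = 0 ∨ k = 2 := by
    have hdvd : orderOf x ∣ k + k := orderOf_dvd_of_pow_eq_one (by rw [pow_add, hxk])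
    rw [hx] at hdvd
    omega
  rcases hk02 with rfl | rfl
  · left
    exact dihedral_iso hx (by simpa using hke.symm) hconj hy (by omega)
  · right
    exact quaternion_iso hx hke.symm hconj hy hcard
end Glue2
section Glue3
variable {G : Type*} [Group G] [Finite G]

/-- The symmetric group on 3 letters is dihedral of order 3. -/
lemma perm3_dihedral : Nonempty (Equiv.Perm (Fin 3) ≃* DihedralGroup 3) := by
  have hne : (Equiv.swap (0 : Fin 3) 1) * (Equiv.swap (0 : Fin 3) 2) ≠
      (Equiv.swap (0 : Fin 3) 2) * (Equiv.swap (0 : Fin 3) 1) := by decide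
  have huv : ¬ Commute (Equiv.swap (0 : Fin 3) 1) (Equiv.swap (0 : Fin 3) 2) := hne
  exact dihedral_of_card_two_mul_prime (by norm_num) (by norm_num)
    (by rw [Nat.card_eq_fintype_card]; decide) huv

lemma s3_iso (hcard : Nat.card G = 6) {u v : G} (huv : ¬ Commute u v) :
    Nonempty (G ≃* Equiv.Perm (Fin 3)) := by
  obtain ⟨e⟩ := dihedral_of_card_two_mul_prime (by norm_num : Nat.Prime 3) (by norm_num)
    (by omega) huv
  obtain ⟨e'⟩ := perm3_dihedral
  exact ⟨e.trans e'.symm⟩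

lemma prime_card_contra {p : ℕ} (hp : p.Prime) (hcard : Nat.card G = p)
    {u v : G} (huv : ¬ Commute u v) : False := by
  haveI : Fact p.Prime := ⟨hp⟩
  haveI := isCyclic_of_prime_card hcard
  obtain ⟨g, hg⟩ := IsCyclic.exists_generator (α := G)
  exact huv (commute_of_gen hg u v)

/-- A group of order 6 with a nontrivial central element is abelian; contradiction with a
non-commuting pair. -/
lemma card_six_center_contra {H : Type*} [Group H] [Finite H] (h6 : Nat.card H = 6)
    {b : H} (hb1 : b ≠ 1) (hbc : ∀ t : H, b * t = t * b)
    {x y : H} (hxy : ¬ Commute x y) : False := by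
  have hbZ : b ∈ Subgroup.center H := Subgroup.mem_center_iff.2 (fun g => (hbc g).symm)
  set Z := Subgroup.center H with hZ
  have hnt : Nontrivial Z := ⟨⟨1, Subgroup.one_mem Z⟩, ⟨b, hbZ⟩, by
    intro hcontra
    exact hb1 (by simpa using (Subtype.ext_iff.mp hcontra).symm)⟩
  have h2 : 2 ≤ Nat.card Z := Finite.one_lt_card
  have hdvd : Nat.card Z ∣ 6 := by
    rw [← h6]; exact Subgroup.card_subgroup_dvd_card Z
  have hq : Nat.card (H ⧸ Z) * Nat.card Z = 6 := by
    rw [← Subgroup.card_eq_card_quotient_mul_card_subgroup]; exact h6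
  have hqle : Nat.card Z ≤ 6 := Nat.le_of_dvd (by norm_num) hdvd
  have hcyc : IsCyclic (H ⧸ Z) := by
    have hcase : Nat.card (H ⧸ Z) = 1 ∨ Nat.card (H ⧸ Z) = 2 ∨ Nat.card (H ⧸ Z) = 3 := by
      interval_cases h : (Nat.card Z) <;> revert hdvd <;> first
        | (intro _; omega)
        | (intro hdvd; exact absurd hdvd (by decide))
    rcases hcase with h | h | h
    · have : Subsingleton (H ⧸ Z) := Nat.card_eq_one_iff_unique.mp h |>.1
      exact isCyclic_of_subsingleton
    · haveI : Fact (Nat.Prime 2) := ⟨Nat.prime_two⟩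
      exact isCyclic_of_prime_card h
    · haveI : Fact (Nat.Prime 3) := ⟨by norm_num⟩
      exact isCyclic_of_prime_card h
  exact hxy (commutative_of_cyclic_center_quotient (QuotientGroup.mk' Z)
    (by rw [QuotientGroup.ker_mk']) x y)

end Glue3
section Comb
variable {G : Type*} [Group G] [Finite G]

/-- Builder: three suitable sets give a strict 3-split decomposition. -/
lemma build3 {A : Subgroup G} (hA : IsMulCommutative A) {C D E : Set G}
    (hcov : (A : Set G) ∪ (C ∪ (D ∪ E)) = Set.univ)
    (hAC : Disjoint (A : Set G) C) (hAD : Disjoint (A : Set G) D)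
    (hAE : Disjoint (A : Set G) E)
    (hCD : Disjoint C D) (hCE : Disjoint C E) (hDE : Disjoint D E)
    (haC : ∀ x ∈ C, ∀ y ∈ C, x ≠ y → ¬ Commute x y)
    (haD : ∀ x ∈ D, ∀ y ∈ D, x ≠ y → ¬ Commute x y)
    (haE : ∀ x ∈ E, ∀ y ∈ E, x ≠ y → ¬ Commute x y)
    (hC2 : 2 ≤ C.ncard) (hD2 : 2 ≤ D.ncard) (hE2 : 2 ≤ E.ncard) :
    ∃ B' : Fin 3 → Set G, IsStrictSplitDecomp A B' := by
  have hU : (⋃ i, (![C, D, E] : Fin 3 → Set G) i) = C ∪ (D ∪ E) := by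
    ext g
    simp only [Set.mem_iUnion, Set.mem_union]
    constructor
    · rintro ⟨i, hi⟩
      fin_cases i
      · exact Or.inl hi
      · exact Or.inr (Or.inl hi)
      · exact Or.inr (Or.inr hi)
    · rintro (hg | hg | hg)
      · exact ⟨0, hg⟩
      · exact ⟨1, hg⟩
      · exact ⟨2, hg⟩
  refine ⟨![C, D, E], ⟨hA, ?_, ?_, ?_, ?_, ?_⟩, ?_⟩
  · rw [hU]; exact hcov
  · intro i; fin_cases i
    · exact hAC
    · exact hAD
    · exact hAE
  · intro i j hij
    fin_cases i <;> fin_cases j <;>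
      first
        | exact absurd rfl hij
        | exact hCD
        | exact hCE
        | exact hDE
        | exact hCD.symm
        | exact hCE.symm
        | exact hDE.symm
  · intro i; fin_cases i
    · exact Set.nonempty_of_ncard_ne_zero (s := C) (by omega)
    · exact Set.nonempty_of_ncard_ne_zero (s := D) (by omega)
    · exact Set.nonempty_of_ncard_ne_zero (s := E) (by omega)
  · intro i; fin_cases i
    · exact haC
    · exact haD
    · exact haE
  · intro i; fin_cases i
    · exact hC2
    · exact hD2
    · exact hE2

/-- Splitting branch: a 2-split where one part has at least 4 elements. -/
lemma split_big {A : Subgroup G} (hA : IsMulCommutative A) {S T : Set G}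
    (hcov : (A : Set G) ∪ (S ∪ T) = Set.univ)
    (hAS : Disjoint (A : Set G) S) (hAT : Disjoint (A : Set G) T)
    (hST : Disjoint S T)
    (haS : ∀ x ∈ S, ∀ y ∈ S, x ≠ y → ¬ Commute x y)
    (haT : ∀ x ∈ T, ∀ y ∈ T, x ≠ y → ¬ Commute x y)
    (hS4 : 4 ≤ S.ncard) (hT2 : 2 ≤ T.ncard) :
    ∃ B' : Fin 3 → Set G, IsStrictSplitDecomp A B' := by
  obtain ⟨x, y, hx, hyS, hxy⟩ := (Set.one_lt_ncard_iff (Set.toFinite S)).mp (by omega)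
  have hpair_sub : ({x, y} : Set G) ⊆ S := by
    rintro z (rfl | rfl) <;> assumption
  have hdiff : (S \ {x, y}).ncard = S.ncard - 2 := by
    rw [Set.ncard_diff hpair_sub (Set.toFinite _), Set.ncard_pair hxy]
  apply build3 hA (C := ({x, y} : Set G)) (D := S \ {x, y}) (E := T)
  · have hre : ({x, y} : Set G) ∪ (S \ {x, y} ∪ T) = S ∪ T := by
      rw [← Set.union_assoc, Set.union_diff_cancel hpair_sub]
    rw [hre]
    exact hcov
  · exact hAS.mono_right hpair_sub
  · exact hAS.mono_right Set.diff_subset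
  · exact hAT
  · exact Set.disjoint_sdiff_right
  · exact hST.mono_left hpair_sub
  · exact hST.mono_left Set.diff_subset
  · intro a ha b hb hab
    exact haS a (hpair_sub ha) b (hpair_sub hb) hab
  · intro a ha b hb hab
    exact haS a ha.1 b hb.1 hab
  · exact haT
  · rw [Set.ncard_pair hxy]
  · omega
  · exact hT2

/-- Cross branch: two parts of size ≥ 3 with a non-commuting pair across. -/
lemma split_cross {A : Subgroup G} (hA : IsMulCommutative A) {S T : Set G}
    (hcov : (A : Set G) ∪ (S ∪ T) = Set.univ)
    (hAS : Disjoint (A : Set G) S) (hAT : Disjoint (A : Set G) T)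
    (hST : Disjoint S T)
    (haS : ∀ x ∈ S, ∀ y ∈ S, x ≠ y → ¬ Commute x y)
    (haT : ∀ x ∈ T, ∀ y ∈ T, x ≠ y → ¬ Commute x y)
    (hS3 : 3 ≤ S.ncard) (hT3 : 3 ≤ T.ncard)
    {x y : G} (hxS : x ∈ S) (hyT : y ∈ T) (hxy : ¬ Commute x y) :
    ∃ B' : Fin 3 → Set G, IsStrictSplitDecomp A B' := by
  have hxny : x ≠ y := by
    rintro rfl
    exact (Set.disjoint_left.mp hST hxS) hyT
  have hyS : y ∉ S := fun h => (Set.disjoint_left.mp hST h) hyT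
  have hxT : x ∉ T := fun h => (Set.disjoint_left.mp hST hxS) h
  apply build3 hA (C := S \ {x}) (D := T \ {y}) (E := ({x, y} : Set G))
  · rw [← hcov]
    ext g
    simp only [Set.mem_union, Set.mem_diff, Set.mem_singleton_iff, Set.mem_insert_iff]
    constructor
    · rintro (hg | ⟨hg, -⟩ | ⟨hg, -⟩ | rfl | rfl) <;> tauto
    · rintro (hg | hg | hg)
      · tauto
      · by_cases hgx : g = x
        · tauto
        · tauto
      · by_cases hgy : g = y
        · tauto
        · tauto
  · exact hAS.mono_right Set.diff_subset
  · exact hAT.mono_right Set.diff_subset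
  · rw [Set.disjoint_left]
    rintro a haA (rfl | rfl)
    · exact (Set.disjoint_left.mp hAS haA) hxS
    · exact (Set.disjoint_left.mp hAT haA) hyT
  · exact (hST.mono_left Set.diff_subset).mono_right Set.diff_subset
  · rw [Set.disjoint_left]
    rintro a ⟨haS', hax⟩ (rfl | rfl)
    · exact hax rfl
    · exact hyS haS'
  · rw [Set.disjoint_left]
    rintro a ⟨haT', hay⟩ (rfl | rfl)
    · exact hxT haT'
    · exact hay rfl
  · intro a ha b hb hab
    exact haS a ha.1 b hb.1 hab
  · intro a ha b hb hab
    exact haT a ha.1 b hb.1 hab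
  · rintro a (rfl | rfl) b (rfl | rfl) hab
    · exact absurd rfl hab
    · exact hxy
    · exact fun h => hxy h.symm
    · exact absurd rfl hab
  · rw [Set.ncard_diff_singleton_of_mem hxS]
    omega
  · rw [Set.ncard_diff_singleton_of_mem hyT]
    omega
  · rw [Set.ncard_pair hxny]

end Comb
section NoCross
variable {G : Type*} [Group G] [Finite G]

lemma subgroup_card_eq_set_ncard (K : Subgroup G) : Nat.card K = (K : Set G).ncard :=
  Nat.card_coe_set_eq _

/-- Contradiction: sizes (3,3), every element of `S` commutes with every element of `T`. -/
lemma no_cross_contra {A : Subgroup G} {S T : Set G}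
    (hAS : Disjoint (A : Set G) S) (hAT : Disjoint (A : Set G) T)
    (hST : Disjoint S T)
    (haS : ∀ x ∈ S, ∀ y ∈ S, x ≠ y → ¬ Commute x y)
    (haT : ∀ x ∈ T, ∀ y ∈ T, x ≠ y → ¬ Commute x y)
    (hS : 2 ≤ S.ncard) (hT3 : T.ncard = 3)
    (hcomm : ∀ x ∈ S, ∀ y ∈ T, Commute x y)
    (hcardeq : Nat.card G = Nat.card A + 6) : False := by
  obtain ⟨b, b', hbS, hb'S, hbb'⟩ := (Set.one_lt_ncard_iff (Set.toFinite S)).mp (by omega)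
  obtain ⟨c, c', hcT, hc'T, hcc'⟩ := (Set.one_lt_ncard_iff (Set.toFinite T)).mp (by omega)
  have hbncomm : ¬ Commute b b' := haS b hbS b' hb'S hbb'
  have hcncomm : ¬ Commute c c' := haT c hcT c' hc'T hcc'
  set Tc := Subgroup.centralizer ({b} : Set G) with hTc
  have hmemTc : ∀ g : G, Commute b g → g ∈ Tc := by
    intro g hg
    rw [hTc, Subgroup.mem_centralizer_iff]
    rintro m rfl
    exact hg
  have hTsub : T ⊆ (Tc : Set G) := fun t ht => hmemTc t (hcomm b hbS t ht)
  have h1A : (1 : G) ∈ (A : Set G) := A.one_mem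
  have h1T : (1 : G) ∉ T := Set.disjoint_left.mp hAT h1A
  have hbT : b ∉ T := Set.disjoint_left.mp hST hbS
  have hb1 : b ≠ 1 := by
    rintro rfl
    exact (Set.disjoint_left.mp hAS h1A) hbS
  have hsub : insert (1 : G) (insert b T) ⊆ (Tc : Set G) := by
    rintro g (rfl | rfl | hg)
    · exact Subgroup.one_mem Tc
    · exact hmemTc _ (Commute.refl _)
    · exact hTsub hg
  have hncard5 : (insert (1 : G) (insert b T)).ncard = 5 := by
    rw [Set.ncard_insert_of_notMem (by
        rintro (rfl | h)
        · exact hb1 rfl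
        · exact h1T h) (Set.toFinite _),
      Set.ncard_insert_of_notMem hbT (Set.toFinite _), hT3]
  have h5le : 5 ≤ Nat.card Tc := by
    rw [subgroup_card_eq_set_ncard]
    calc 5 = (insert (1 : G) (insert b T)).ncard := hncard5.symm
      _ ≤ (Tc : Set G).ncard := Set.ncard_le_ncard hsub (Set.toFinite _)
  have hdvdG : Nat.card Tc ∣ Nat.card G := Subgroup.card_subgroup_dvd_card Tc
  have hadvd : Nat.card A ∣ 6 := by
    have h := Subgroup.card_subgroup_dvd_card A
    rw [hcardeq] at h
    exact (Nat.dvd_add_right dvd_rfl).mp h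
  have hapos : 1 ≤ Nat.card A := Nat.card_pos
  have hale : Nat.card A ≤ 6 := Nat.le_of_dvd (by norm_num) hadvd
  -- Tc = ⊤ contradiction helper
  have htop_contra : Nat.card Tc = Nat.card G → False := by
    intro htop
    have : Tc = ⊤ := Subgroup.eq_top_of_card_eq Tc htop
    have hb'Tc : b' ∈ Tc := this ▸ Subgroup.mem_top b'
    exact hbncomm (Subgroup.mem_centralizer_iff.mp hb'Tc b rfl)
  -- six case
  have hsix_contra : Nat.card Tc = 6 → False := by
    intro h6
    have hbTc : b ∈ Tc := hmemTc b (Commute.refl b)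
    have hcTc : c ∈ Tc := hTsub hcT
    have hc'Tc : c' ∈ Tc := hTsub hc'T
    have hb1' : (⟨b, hbTc⟩ : ↥Tc) ≠ 1 := by
      intro hcontra
      exact hb1 (Subtype.ext_iff.mp hcontra)
    have hbc' : ∀ t : ↥Tc, (⟨b, hbTc⟩ : ↥Tc) * t = t * ⟨b, hbTc⟩ := by
      intro t
      have ht2 : b * (t : G) = (t : G) * b := Subgroup.mem_centralizer_iff.mp t.2 b rfl
      exact Subtype.ext ht2
    have hxy' : ¬ Commute (⟨c, hcTc⟩ : ↥Tc) (⟨c', hc'Tc⟩ : ↥Tc) := by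
      intro hcomm'
      exact hcncomm (congrArg Subtype.val hcomm')
    exact card_six_center_contra (H := ↥Tc) h6 hb1' hbc' hxy'
  -- case analysis on |A|
  have hle12 : Nat.card G ≤ 12 := by omega
  have hTcle : Nat.card Tc ≤ Nat.card G := Nat.le_of_dvd Nat.card_pos hdvdG
  interval_cases ha : (Nat.card A)
  · -- |A| = 1, |G| = 7
    rw [hcardeq] at hdvdG hTcle
    interval_cases hd : (Nat.card Tc) <;>
      first
        | omega
        | exact htop_contra (by omega)
  · rw [hcardeq] at hdvdG hTcle
    interval_cases hd : (Nat.card Tc) <;>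
      first
        | omega
        | exact htop_contra (by omega)
  · rw [hcardeq] at hdvdG hTcle
    interval_cases hd : (Nat.card Tc) <;>
      first
        | omega
        | exact htop_contra (by omega)
  · exact absurd hadvd (by norm_num)
  · exact absurd hadvd (by norm_num)
  · -- |A| = 6, |G| = 12
    rw [hcardeq] at hdvdG hTcle
    interval_cases hd : (Nat.card Tc) <;>
      first
        | omega
        | exact hsix_contra (by omega)
        | exact htop_contra (by omega)
end NoCross

end SplitProofAux

theorem strict_two_split_to_three_split {G : Type*} [Group G] [Finite G]
    (A : Subgroup G) (B : Fin 2 → Set G) (h : IsStrictSplitDecomp A B)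
    (h1 : ¬ Nonempty (G ≃* Equiv.Perm (Fin 3)))
    (h2 : ¬ Nonempty (G ≃* DihedralGroup 5))
    (h3 : ¬ ((Nonempty (G ≃* DihedralGroup 4) ∨ Nonempty (G ≃* QuaternionGroup 2)) ∧
      Nat.card A = 4)) :
    ∃ B' : Fin 3 → Set G, IsStrictSplitDecomp A B' := by
  classical
  open SplitProofAux in
  obtain ⟨⟨hA, hcover, hdisjA, hdisjB, hnon, hanti⟩, hcard2⟩ := h
  have hU : (⋃ i, B i) = B 0 ∪ B 1 := by
    ext g
    simp only [Set.mem_iUnion, Set.mem_union]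
    constructor
    · rintro ⟨i, hi⟩
      fin_cases i
      · exact Or.inl hi
      · exact Or.inr hi
    · rintro (hg | hg)
      · exact ⟨0, hg⟩
      · exact ⟨1, hg⟩
  have hcov' : (A : Set G) ∪ (B 0 ∪ B 1) = Set.univ := by rw [← hU]; exact hcover
  have hST : Disjoint (B 0) (B 1) := hdisjB (by decide : (0 : Fin 2) ≠ 1)
  have hAS : Disjoint (A : Set G) (B 0) := hdisjA 0
  have hAT : Disjoint (A : Set G) (B 1) := hdisjA 1
  have haS := hanti 0
  have haT := hanti 1
  have hS2 := hcard2 0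
  have hT2 := hcard2 1
  have hcardG : Nat.card G = Nat.card A + ((B 0).ncard + (B 1).ncard) := by
    have hu : (Set.univ : Set G).ncard = Nat.card G := Set.ncard_univ G
    rw [← hcov'] at hu
    rw [Set.ncard_union_eq (Set.disjoint_union_right.mpr ⟨hAS, hAT⟩)
        (Set.toFinite _) (Set.toFinite _),
      Set.ncard_union_eq hST (Set.toFinite _) (Set.toFinite _)] at hu
    have hca : ((A : Set G)).ncard = Nat.card A := (Nat.card_coe_set_eq _).symm
    rw [hca] at hu
    omega
  by_cases hS4 : 4 ≤ (B 0).ncard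
  · exact SplitProofAux.split_big hA hcov' hAS hAT hST haS haT hS4 hT2
  by_cases hT4 : 4 ≤ (B 1).ncard
  · have hcov'' : (A : Set G) ∪ (B 1 ∪ B 0) = Set.univ := by
      rw [Set.union_comm (B 1) (B 0)]; exact hcov'
    exact SplitProofAux.split_big hA hcov'' hAT hAS hST.symm haT haS hT4 hS2
  by_cases h33 : (B 0).ncard = 3 ∧ (B 1).ncard = 3
  · by_cases hcross : ∃ x ∈ B 0, ∃ y ∈ B 1, ¬ Commute x y
    · obtain ⟨x, hx, y, hy, hxy⟩ := hcross
      exact SplitProofAux.split_cross hA hcov' hAS hAT hST haS haT (by omega) (by omega)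
        hx hy hxy
    · push_neg at hcross
      exact absurd (SplitProofAux.no_cross_contra hAS hAT hST haS haT (by omega) h33.2
        hcross (by omega)) (fun hf => hf)
  · exfalso
    obtain ⟨u, v, huS, hvS, huv⟩ :=
      (Set.one_lt_ncard_iff (Set.toFinite (B 0))).mp (by omega)
    have hncomm : ¬ Commute u v := haS u huS v hvS huv
    have hadvd : Nat.card A ∣ (B 0).ncard + (B 1).ncard := by
      have hd := Subgroup.card_subgroup_dvd_card A
      rw [hcardG] at hd
      exact (Nat.dvd_add_right dvd_rfl).mp hd
    have h45 : (B 0).ncard + (B 1).ncard = 4 ∨ (B 0).ncard + (B 1).ncard = 5 := by omega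
    have hapos : 1 ≤ Nat.card A := Nat.card_pos
    rcases h45 with h4 | h5
    · rw [h4] at hadvd
      have hale : Nat.card A ≤ 4 := Nat.le_of_dvd (by norm_num) hadvd
      have hcases : Nat.card A = 1 ∨ Nat.card A = 2 ∨ Nat.card A = 4 := by
        interval_cases (Nat.card A) <;> omega
      rcases hcases with ha | ha | ha
      · exact SplitProofAux.prime_card_contra (by norm_num : Nat.Prime 5) (by omega) hncomm
      · exact h1 (SplitProofAux.s3_iso (by omega) hncomm)
      · exact h3 ⟨SplitProofAux.order8_class (by omega) hncomm, ha⟩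
    · rw [h5] at hadvd
      have hale : Nat.card A ≤ 5 := Nat.le_of_dvd (by norm_num) hadvd
      have hcases : Nat.card A = 1 ∨ Nat.card A = 5 := by
        interval_cases (Nat.card A) <;> omega
      rcases hcases with ha | ha
      · exact h1 (SplitProofAux.s3_iso (by omega) hncomm)
      · exact h2 (SplitProofAux.dihedral_of_card_two_mul_prime (p := 5) (by norm_num)
          (by norm_num) (by omega) hncomm)
end

section
/- Suppose a finite group G has a strict 3-split decomposition with respect to a normal abelian subgroup A. Then: (1) every element of the quotient group G/A has order at most 4; (2) every prime dividing |G/A| is 2 or 3; (3) if 3 divides |G/A|, then the Sylow 3-subgroups of G have order exactly 3. -/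
/-- The closure of two commuting elements is commutative. -/
lemma splitDecomp_closure_pair_comm {G : Type*} [Group G] {a b : G} (hab : Commute a b) :
    ∀ x ∈ Subgroup.closure {a, b}, ∀ y ∈ Subgroup.closure {a, b}, Commute x y := by
  intro x hx y hy
  have h1 : Subgroup.closure {a, b} ≤ Subgroup.centralizer {a, b} := by
    rw [Subgroup.closure_le]
    rintro z (rfl | rfl) <;> rw [SetLike.mem_coe, Subgroup.mem_centralizer_iff] <;>
      rintro w (rfl | rfl) <;> first | rfl | exact hab | exact hab.symm
  have hy' := h1 hy
  rw [Subgroup.mem_centralizer_iff] at hy'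
  have h2 : Subgroup.closure {a, b} ≤ Subgroup.centralizer {y} := by
    rw [Subgroup.closure_le]
    rintro z (rfl | rfl) <;> rw [SetLike.mem_coe, Subgroup.mem_centralizer_iff] <;>
      rintro w rfl
    · exact (hy' z (by simp)).symm
    · exact (hy' z (by simp)).symm
  have h3 := h2 hx
  rw [Subgroup.mem_centralizer_iff] at h3
  exact (h3 y rfl).symm

/-- In a 3-split decomposition, any pairwise commuting set avoiding `A` has at most 3 elements. -/
lemma splitDecomp_ncard_le {G : Type*} [Group G] [Finite G] {A : Subgroup G} {B : Fin 3 → Set G}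
    (h : IsSplitDecomp A B) (S : Set G) (hA : ∀ a ∈ S, a ∉ A)
    (hc : ∀ a ∈ S, ∀ b ∈ S, Commute a b) : S.ncard ≤ 3 := by
  obtain ⟨-, hcover, -, -, -, hnc⟩ := h
  have hex : ∀ a : S, ∃ i, (a : G) ∈ B i := by
    rintro ⟨a, ha⟩
    have : a ∈ (A : Set G) ∪ ⋃ i, B i := by rw [hcover]; trivial
    rcases this with h' | h'
    · exact absurd h' (hA a ha)
    · simpa using h'
  choose f hf using hex
  have hinj : Function.Injective f := by
    intro a b hab
    by_contra hne
    have hne' : (a : G) ≠ b := fun e => hne (Subtype.ext e)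
    exact hnc (f a) a (hf a) b (hab ▸ hf b) hne' (hc a a.2 b b.2)
  calc S.ncard = Nat.card S := (Nat.card_coe_set_eq S).symm
    _ ≤ Nat.card (Fin 3) := Nat.card_le_card_of_injective f hinj
    _ = 3 := by simp

/-- A commutative subgroup containing an element outside `A` has order at most 6. -/
lemma splitDecomp_abelian_card_le {G : Type*} [Group G] [Finite G] {A : Subgroup G}
    {B : Fin 3 → Set G} (h : IsSplitDecomp A B) {H : Subgroup G}
    (hcomm : ∀ x ∈ H, ∀ y ∈ H, Commute x y) {z : G} (hz : z ∈ H) (hzA : z ∉ A) :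
    Nat.card H ≤ 6 := by
  have hsplit : (H : Set G) = ((H : Set G) ∩ A) ∪ ((H : Set G) \ A) :=
    (Set.inter_union_diff _ _).symm
  have h1 : ((H : Set G) \ A).ncard ≤ 3 :=
    splitDecomp_ncard_le h _ (fun a ha => ha.2) (fun a ha b hb => hcomm a ha.1 b hb.1)
  have h2 : ((H : Set G) ∩ A).ncard ≤ 3 := by
    have himg : ((z * ·) '' ((H : Set G) ∩ A)).ncard = ((H : Set G) ∩ A).ncard :=
      Set.ncard_image_of_injective _ (mul_right_injective z)
    rw [← himg]
    refine splitDecomp_ncard_le h _ ?_ ?_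
    · rintro _ ⟨a, ⟨haH, haA⟩, rfl⟩ hmem
      exact hzA (by simpa using mul_mem hmem (inv_mem haA))
    · rintro _ ⟨a, ⟨haH, haA⟩, rfl⟩ _ ⟨b, ⟨hbH, hbA⟩, rfl⟩
      have h1 := hcomm z hz a haH
      have h2 := hcomm z hz b hbH
      have h3 := hcomm a haH b hbH
      exact Commute.mul_left ((Commute.refl z).mul_right h2) (h1.symm.mul_right h3)
  calc Nat.card H = (H : Set G).ncard := by
        rw [← Nat.card_coe_set_eq]; rfl
    _ = (((H : Set G) ∩ A) ∪ ((H : Set G) \ A)).ncard := by rw [← hsplit]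
    _ ≤ ((H : Set G) ∩ A).ncard + ((H : Set G) \ A).ncard := Set.ncard_union_le _ _
    _ ≤ 6 := by omega

theorem strict_three_split_quotient_properties {G : Type*} [Group G] [Finite G]
    (A : Subgroup G) [A.Normal] (B : Fin 3 → Set G) (h : IsStrictSplitDecomp A B) :
    (∀ x : G ⧸ A, orderOf x ≤ 4) ∧
    (∀ p : ℕ, p.Prime → p ∣ Nat.card (G ⧸ A) → p = 2 ∨ p = 3) ∧
    (3 ∣ Nat.card (G ⧸ A) → ∀ P : Sylow 3 G, Nat.card ↥(P : Subgroup G) = 3) := by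
  obtain ⟨hsd, -⟩ := h
  -- Part 1
  have part1 : ∀ x : G ⧸ A, orderOf x ≤ 4 := by
    intro x
    by_contra hlt
    push_neg at hlt
    obtain ⟨g, rfl⟩ := QuotientGroup.mk'_surjective A x
    set m := orderOf ((QuotientGroup.mk' A) g) with hm
    have hnotA : ∀ k : Fin 4, g ^ (k.val + 1) ∉ A := by
      intro k hk
      have h1 : ((QuotientGroup.mk' A) g) ^ (k.val + 1) = 1 := by
        rw [← map_pow]
        exact (QuotientGroup.eq_one_iff _).mpr hk
      have h2 : m ∣ k.val + 1 := orderOf_dvd_of_pow_eq_one h1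
      have := Nat.le_of_dvd (Nat.succ_pos _) h2
      omega
    obtain ⟨-, hcover, -, -, -, hnc⟩ := hsd
    have hex : ∀ k : Fin 4, ∃ i, g ^ (k.val + 1) ∈ B i := by
      intro k
      have : g ^ (k.val + 1) ∈ (A : Set G) ∪ ⋃ i, B i := by rw [hcover]; trivial
      rcases this with h' | h'
      · exact absurd h' (hnotA k)
      · simpa using h'
    choose f hf using hex
    obtain ⟨k, l, hkl, hfkl⟩ := Fintype.exists_ne_map_eq_of_card_lt f (by simp)
    have hcom : Commute (g ^ (k.val + 1)) (g ^ (l.val + 1)) :=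
      (Commute.refl g).pow_pow _ _
    have hne : g ^ (k.val + 1) ≠ g ^ (l.val + 1) := by
      intro he
      have h1 : ((QuotientGroup.mk' A) g) ^ (k.val + 1) =
          ((QuotientGroup.mk' A) g) ^ (l.val + 1) := by
        rw [← map_pow, ← map_pow, he]
      have h2 : k.val + 1 = l.val + 1 :=
        pow_injOn_Iio_orderOf (by simp only [Set.mem_Iio]; omega)
          (by simp only [Set.mem_Iio]; omega) h1
      exact hkl (Fin.ext (by omega))
    exact hnc (f k) _ (hf k) _ (hfkl ▸ hf l) hne hcom
  refine ⟨part1, ?_, ?_⟩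
  -- Part 2
  · intro p hp hdvd
    haveI : Fact p.Prime := ⟨hp⟩
    obtain ⟨y, hy⟩ := exists_prime_orderOf_dvd_card' p hdvd
    have h4 := part1 y
    rw [hy] at h4
    have h2 := hp.two_le
    interval_cases p
    · exact Or.inl rfl
    · exact Or.inr rfl
    · exact absurd hp (by decide)
  -- Part 3
  · intro h3 P
    haveI : Fact (Nat.Prime 3) := ⟨by norm_num⟩
    have hGcard : Nat.card (G ⧸ A) ∣ Nat.card G := by
      rw [Subgroup.card_eq_card_quotient_mul_card_subgroup A]
      exact Dvd.intro _ rfl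
    have h3G : 3 ∣ Nat.card G := h3.trans hGcard
    have hG0 : Nat.card G ≠ 0 := Nat.card_pos.ne'
    set k := (Nat.card G).factorization 3 with hkdef
    have hk1 : 1 ≤ k := Nat.Prime.factorization_pos_of_dvd (by norm_num) hG0 h3G
    have hcardP : Nat.card ↥(P : Subgroup G) = 3 ^ k := P.card_eq_multiplicity
    -- the key divisor lemma
    have hdivlem : ∀ H : Subgroup G, Nat.card H ∣ 3 ^ k → Nat.card H ≤ 6 →
        Nat.card H = 1 ∨ Nat.card H = 3 := by
      intro H hdvd hle
      obtain ⟨j, hjk, hj⟩ := (Nat.dvd_prime_pow Nat.prime_three).mp hdvd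
      rcases Nat.lt_or_ge j 2 with hj2 | hj2
      · interval_cases j
        · exact Or.inl (by simpa using hj)
        · exact Or.inr (by simpa using hj)
      · exfalso
        have : 3 ^ 2 ≤ 3 ^ j := Nat.pow_le_pow_right (by norm_num) hj2
        omega
    suffices hk : k = 1 by rw [hcardP, hk, pow_one]
    by_contra hkne
    have hk2 : 2 ≤ k := by omega
    -- get an element z of 3-power order outside A
    obtain ⟨y, hy⟩ := exists_prime_orderOf_dvd_card' 3 h3
    obtain ⟨g, rfl⟩ := QuotientGroup.mk'_surjective A y
    have h3n : 3 ∣ orderOf g := hy ▸ orderOf_map_dvd (QuotientGroup.mk' A) g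
    set n := orderOf g with hn
    have hn0 : n ≠ 0 := (orderOf_pos g).ne'
    set v := n.factorization 3 with hv
    have hvd : 3 ^ v ∣ n := Nat.ordProj_dvd n 3
    set z := g ^ (n / 3 ^ v) with hz
    have hzord : orderOf z = 3 ^ v := orderOf_pow_orderOf_div hn0 hvd
    have hzA : z ∉ A := by
      intro hzmem
      have h1 : ((QuotientGroup.mk' A) g) ^ (n / 3 ^ v) = 1 := by
        rw [← map_pow]
        exact (QuotientGroup.eq_one_iff _).mpr hzmem
      have hd := orderOf_dvd_of_pow_eq_one h1
      rw [hy] at hd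
      exact Nat.not_dvd_ordCompl (by norm_num) hn0 hd
    have hz1 : z ≠ 1 := fun e => hzA (e ▸ one_mem A)
    have hzpg : IsPGroup 3 (Subgroup.zpowers z) :=
      IsPGroup.of_card (by rw [Nat.card_zpowers, hzord])
    obtain ⟨Q, hQle⟩ := hzpg.exists_le_sylow
    have hcardQ : Nat.card ↥(Q : Subgroup G) = 3 ^ k := Q.card_eq_multiplicity
    have hzQ : z ∈ (Q : Subgroup G) := hQle (Subgroup.mem_zpowers z)
    -- a nontrivial central element c of Q
    haveI : Nontrivial ↥(Q : Subgroup G) := by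
      rw [← Finite.one_lt_card_iff_nontrivial, hcardQ]
      exact Nat.one_lt_pow (by omega) (by norm_num)
    haveI := (Q.2 : IsPGroup 3 ↥(Q : Subgroup G)).center_nontrivial
    obtain ⟨c', hc'⟩ := exists_ne (1 : Subgroup.center ↥(Q : Subgroup G))
    set c : G := ((c' : ↥(Q : Subgroup G)) : G) with hcdef
    have hcQ : c ∈ (Q : Subgroup G) := ((c' : ↥(Q : Subgroup G))).2
    have hc1 : c ≠ 1 := by
      intro he
      apply hc'
      ext
      exact he
    have hcommc : ∀ q ∈ (Q : Subgroup G), Commute q c := by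
      intro q hq
      have := Subgroup.mem_center_iff.mp c'.2 ⟨q, hq⟩
      exact congrArg Subtype.val this
    have hzc : Commute z c := hcommc z hzQ
    -- H = closure {z, c} has order 3
    set H := Subgroup.closure {z, c} with hH
    have hzH : z ∈ H := Subgroup.subset_closure (Set.mem_insert _ _)
    have hcH : c ∈ H := Subgroup.subset_closure (Set.mem_insert_of_mem _ rfl)
    have hHcomm := splitDecomp_closure_pair_comm hzc
    have hHQ : H ≤ (Q : Subgroup G) := by
      rw [hH, Subgroup.closure_le]
      rintro w (rfl | rfl)
      · exact hzQ
      · exact hcQ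
    have hHle6 : Nat.card H ≤ 6 := splitDecomp_abelian_card_le hsd hHcomm hzH hzA
    have hHdvd : Nat.card H ∣ 3 ^ k := hcardQ ▸ Subgroup.card_dvd_of_le hHQ
    have hHne1 : Nat.card H ≠ 1 := by
      intro h1
      rw [Subgroup.card_eq_one] at h1
      rw [h1] at hzH
      exact hz1 (Subgroup.mem_bot.mp hzH)
    have hH3 : Nat.card H = 3 := by
      rcases hdivlem H hHdvd hHle6 with h' | h'
      · exact absurd h' hHne1
      · exact h'
    -- zpowers z = H and zpowers c = H
    have hzple : Subgroup.zpowers z ≤ H := Subgroup.zpowers_le.mpr hzH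
    have hcple : Subgroup.zpowers c ≤ H := Subgroup.zpowers_le.mpr hcH
    have hordz : orderOf z = 3 := by
      have hd : Nat.card (Subgroup.zpowers z) ∣ 3 := hH3 ▸ Subgroup.card_dvd_of_le hzple
      rw [Nat.card_zpowers] at hd
      rcases (Nat.dvd_prime Nat.prime_three).mp hd with h' | h'
      · exact absurd (orderOf_eq_one_iff.mp h') hz1
      · exact h'
    have hordc : orderOf c = 3 := by
      have hd : Nat.card (Subgroup.zpowers c) ∣ 3 := hH3 ▸ Subgroup.card_dvd_of_le hcple
      rw [Nat.card_zpowers] at hd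
      rcases (Nat.dvd_prime Nat.prime_three).mp hd with h' | h'
      · exact absurd (orderOf_eq_one_iff.mp h') hc1
      · exact h'
    have hzpeq : Subgroup.zpowers z = H :=
      Subgroup.eq_of_le_of_card_ge hzple (by rw [hH3, Nat.card_zpowers, hordz])
    have hcpeq : Subgroup.zpowers c = H :=
      Subgroup.eq_of_le_of_card_ge hcple (by rw [hH3, Nat.card_zpowers, hordc])
    -- z commutes with all of Q
    obtain ⟨t, ht⟩ := Subgroup.mem_zpowers_iff.mp (hcpeq ▸ hzH : z ∈ Subgroup.zpowers c)
    have hcommz : ∀ q ∈ (Q : Subgroup G), Commute q z := by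
      intro q hq
      exact ht ▸ (hcommc q hq).zpow_right t
    -- pick y ∈ Q outside H
    have hnotle : ¬(Q : Subgroup G) ≤ H := by
      intro hle
      have hcle := Subgroup.card_le_of_le hle
      rw [hcardQ, hH3] at hcle
      have : 3 ^ 2 ≤ 3 ^ k := Nat.pow_le_pow_right (by norm_num) hk2
      omega
    obtain ⟨w, hwQ, hwH⟩ := SetLike.not_le_iff_exists.mp hnotle
    -- H' = closure {z, w}
    have hzw : Commute z w := (hcommz w hwQ).symm
    set H' := Subgroup.closure {z, w} with hH'
    have hzH' : z ∈ H' := Subgroup.subset_closure (Set.mem_insert _ _)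
    have hwH' : w ∈ H' := Subgroup.subset_closure (Set.mem_insert_of_mem _ rfl)
    have hH'comm := splitDecomp_closure_pair_comm hzw
    have hH'Q : H' ≤ (Q : Subgroup G) := by
      rw [hH', Subgroup.closure_le]
      rintro u (rfl | rfl)
      · exact hzQ
      · exact hwQ
    have hH'le6 : Nat.card H' ≤ 6 := splitDecomp_abelian_card_le hsd hH'comm hzH' hzA
    have hH'dvd : Nat.card H' ∣ 3 ^ k := hcardQ ▸ Subgroup.card_dvd_of_le hH'Q
    have hH'ne1 : Nat.card H' ≠ 1 := by
      intro h1
      rw [Subgroup.card_eq_one] at h1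
      rw [h1] at hzH'
      exact hz1 (Subgroup.mem_bot.mp hzH')
    have hH'3 : Nat.card H' = 3 := by
      rcases hdivlem H' hH'dvd hH'le6 with h' | h'
      · exact absurd h' hH'ne1
      · exact h'
    have hzple' : Subgroup.zpowers z ≤ H' := Subgroup.zpowers_le.mpr hzH'
    have hzpeq' : Subgroup.zpowers z = H' :=
      Subgroup.eq_of_le_of_card_ge hzple' (by rw [hH'3, Nat.card_zpowers, hordz])
    exact hwH (hzpeq ▸ hzpeq'.symm ▸ hwH' : w ∈ H)
end

section
/- There exists a function f from the positive integers to the positive integers such that for every finite group G, every abelian subgroup A of G, and every positive integer n, if G has an n-split decomposition with respect to A, then the index |G : A| is at most f(n). -/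
open Subgroup MulAction

lemma index_le_of_small_centralizers (G : Type) [Group G] [Finite G] (A : Subgroup G) (c : ℕ)
    (h : ∀ u : G, u ∉ A → Nat.card (Subgroup.centralizer {u} : Subgroup G) ≤ c) :
    A.index ≤ Nat.factorial c := by
  classical
  letI : Fintype G := Fintype.ofFinite G
  letI : Fintype (ConjAct G) := ‹Fintype G›
  have hL1 : 1 ≤ Nat.factorial c := Nat.one_le_iff_ne_zero.mpr (Nat.factorial_ne_zero c)
  set L := Nat.factorial c with hLdef
  letI : Fintype (orbitRel.Quotient (ConjAct G) G) := Fintype.ofFinite _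
  letI : ∀ ω : orbitRel.Quotient (ConjAct G) G, Fintype (orbitRel.Quotient.orbit ω) :=
    fun ω => Fintype.ofFinite _
  -- total count
  have hsum : Nat.card G
      = ∑ ω : orbitRel.Quotient (ConjAct G) G, Nat.card (orbitRel.Quotient.orbit ω) := by
    rw [Nat.card_eq_fintype_card,
      Fintype.card_congr (selfEquivSigmaOrbits' (ConjAct G) G), Fintype.card_sigma]
    exact Finset.sum_congr rfl fun ω _ => (Nat.card_eq_fintype_card).symm
  set good : orbitRel.Quotient (ConjAct G) G → Prop :=
    fun ω => orbitRel.Quotient.orbit ω ⊆ (A : Set G) with hgooddef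
  have hsplit : ∑ ω : orbitRel.Quotient (ConjAct G) G, Nat.card (orbitRel.Quotient.orbit ω)
      = (∑ ω ∈ Finset.univ.filter good, Nat.card (orbitRel.Quotient.orbit ω))
        + ∑ ω ∈ Finset.univ.filter (fun ω => ¬ good ω), Nat.card (orbitRel.Quotient.orbit ω) :=
    (Finset.sum_filter_add_sum_filter_not _ _ _).symm
  -- good orbits are disjoint subsets of A
  have hdisj : ∀ ω₁ ∈ Finset.univ.filter good, ∀ ω₂ ∈ Finset.univ.filter good, ω₁ ≠ ω₂ →
      Disjoint ((orbitRel.Quotient.orbit ω₁).toFinset) ((orbitRel.Quotient.orbit ω₂).toFinset) := by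
    intro ω₁ _ ω₂ _ hne
    rw [Finset.disjoint_left]
    intro a ha₁ ha₂
    rw [Set.mem_toFinset] at ha₁ ha₂
    exact hne ((orbitRel.Quotient.mem_orbit.mp ha₁).symm.trans
      (orbitRel.Quotient.mem_orbit.mp ha₂))
  have hgoodle : (∑ ω ∈ Finset.univ.filter good, Nat.card (orbitRel.Quotient.orbit ω))
      ≤ Nat.card A := by
    have hsub : (Finset.univ.filter good).biUnion (fun ω => (orbitRel.Quotient.orbit ω).toFinset)
        ⊆ (A : Set G).toFinset := by
      intro a ha
      rw [Finset.mem_biUnion] at ha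
      obtain ⟨ω, hω, haω⟩ := ha
      rw [Set.mem_toFinset] at haω ⊢
      exact (Finset.mem_filter.mp hω).2 haω
    calc (∑ ω ∈ Finset.univ.filter good, Nat.card (orbitRel.Quotient.orbit ω))
        = ∑ ω ∈ Finset.univ.filter good, ((orbitRel.Quotient.orbit ω).toFinset).card :=
          Finset.sum_congr rfl fun ω _ => by
            rw [Set.toFinset_card, Nat.card_eq_fintype_card]
      _ = ((Finset.univ.filter good).biUnion
            (fun ω => (orbitRel.Quotient.orbit ω).toFinset)).card :=
          (Finset.card_biUnion hdisj).symm
      _ ≤ ((A : Set G).toFinset).card := Finset.card_le_card hsub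
      _ = Nat.card A := by rw [Set.toFinset_card, ← Nat.card_eq_fintype_card]; rfl
  -- the trivial orbit is good and nonempty
  have hgood1 : 1 ≤ ∑ ω ∈ Finset.univ.filter good, Nat.card (orbitRel.Quotient.orbit ω) := by
    have horb1 : orbitRel.Quotient.orbit
        (Quotient.mk'' (1:G) : orbitRel.Quotient (ConjAct G) G) ⊆ (A : Set G) := by
      rw [orbitRel.Quotient.orbit_mk]
      rintro x ⟨g, rfl⟩
      have h1 : g • (1:G) = 1 := by
        show ConjAct.ofConjAct g * 1 * (ConjAct.ofConjAct g)⁻¹ = 1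
        simp
      simpa [h1] using A.one_mem
    have hmem : (Quotient.mk'' (1:G) : orbitRel.Quotient (ConjAct G) G)
        ∈ Finset.univ.filter good :=
      Finset.mem_filter.mpr ⟨Finset.mem_univ _, horb1⟩
    have hpos : 1 ≤ Nat.card (orbitRel.Quotient.orbit
        (Quotient.mk'' (1:G) : orbitRel.Quotient (ConjAct G) G)) := by
      have : (1:G) ∈ orbitRel.Quotient.orbit
          (Quotient.mk'' (1:G) : orbitRel.Quotient (ConjAct G) G) :=
        orbitRel.Quotient.mem_orbit.mpr rfl
      have hne : Nonempty (orbitRel.Quotient.orbit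
          (Quotient.mk'' (1:G) : orbitRel.Quotient (ConjAct G) G)) := ⟨⟨1, this⟩⟩
      exact Nat.one_le_iff_ne_zero.mpr (Nat.card_ne_zero.mpr ⟨hne, Set.toFinite _⟩)
    exact le_trans hpos (Finset.single_le_sum
      (f := fun ω => Nat.card (orbitRel.Quotient.orbit ω)) (fun ω _ => Nat.zero_le _) hmem)
  -- bad orbits
  have hbad : ∀ ω : orbitRel.Quotient (ConjAct G) G, ∃ m : ℕ, ¬ good ω →
      (1 ≤ m ∧ L * Nat.card (orbitRel.Quotient.orbit ω) = m * Nat.card G) := by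
    intro ω
    by_cases hg : good ω
    · exact ⟨1, fun hng => absurd hg hng⟩
    · obtain ⟨v, hvorb, hvA⟩ := Set.not_subset.mp hg
      have hωv : orbitRel.Quotient.orbit ω = MulAction.orbit (ConjAct G) v := by
        rw [← orbitRel.Quotient.mem_orbit.mp hvorb, orbitRel.Quotient.orbit_mk]
      have hos : Nat.card (MulAction.orbit (ConjAct G) v)
          * Nat.card (stabilizer (ConjAct G) v) = Nat.card G := by
        rw [Nat.card_eq_fintype_card, Nat.card_eq_fintype_card, Nat.card_eq_fintype_card]
        exact card_orbit_mul_card_stabilizer_eq_card_group (ConjAct G) v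
      set d := Nat.card (stabilizer (ConjAct G) v) with hddef
      have hcent : Nat.card (Subgroup.centralizer {v} : Subgroup G) = d := by
        rw [Subgroup.centralizer_eq_comap_stabilizer, hddef]
        exact Nat.card_congr (Equiv.subtypeEquiv ConjAct.toConjAct.toEquiv (fun x => Iff.rfl))
      have hdc : d ≤ c := hcent ▸ h v hvA
      have hd1 : 1 ≤ d := Nat.card_pos
      have hdvd : d ∣ L := Nat.dvd_factorial hd1 hdc
      refine ⟨L / d, fun _ => ⟨?_, ?_⟩⟩
      · exact Nat.div_pos (Nat.le_of_dvd (lt_of_lt_of_le Nat.zero_lt_one hL1) hdvd) hd1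
      · calc L * Nat.card (orbitRel.Quotient.orbit ω)
            = (L / d) * d * Nat.card (orbitRel.Quotient.orbit ω) := by
              rw [Nat.div_mul_cancel hdvd]
          _ = (L / d) * (Nat.card (orbitRel.Quotient.orbit ω) * d) := by ring
          _ = (L / d) * (Nat.card (MulAction.orbit (ConjAct G) v) * d) := by rw [hωv]
          _ = (L / d) * Nat.card G := by rw [hos]
  choose m hm using hbad
  have heq : L * Nat.card G
      = L * (∑ ω ∈ Finset.univ.filter good, Nat.card (orbitRel.Quotient.orbit ω))
        + (∑ ω ∈ Finset.univ.filter (fun ω => ¬ good ω), m ω) * Nat.card G := by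
    calc L * Nat.card G
        = ∑ ω : orbitRel.Quotient (ConjAct G) G, L * Nat.card (orbitRel.Quotient.orbit ω) := by
          rw [hsum, Finset.mul_sum]
      _ = (∑ ω ∈ Finset.univ.filter good, L * Nat.card (orbitRel.Quotient.orbit ω))
          + ∑ ω ∈ Finset.univ.filter (fun ω => ¬ good ω),
              L * Nat.card (orbitRel.Quotient.orbit ω) :=
          (Finset.sum_filter_add_sum_filter_not _ _ _).symm
      _ = (∑ ω ∈ Finset.univ.filter good, L * Nat.card (orbitRel.Quotient.orbit ω))
          + ∑ ω ∈ Finset.univ.filter (fun ω => ¬ good ω), m ω * Nat.card G := by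
          refine congrArg _ (Finset.sum_congr rfl fun ω hω => ?_)
          exact (hm ω (Finset.mem_filter.mp hω).2).2
      _ = L * (∑ ω ∈ Finset.univ.filter good, Nat.card (orbitRel.Quotient.orbit ω))
          + (∑ ω ∈ Finset.univ.filter (fun ω => ¬ good ω), m ω) * Nat.card G := by
          rw [Finset.mul_sum, Finset.sum_mul]
  have hGpos : 0 < Nat.card G := Nat.card_pos
  set Sg := ∑ ω ∈ Finset.univ.filter good, Nat.card (orbitRel.Quotient.orbit ω)
  set M := ∑ ω ∈ Finset.univ.filter (fun ω => ¬ good ω), m ω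
  have hML : M < L := by
    rcases le_or_gt L M with hc' | hc'
    · exfalso
      have h1 : L * 1 ≤ L * Sg := Nat.mul_le_mul_left L hgood1
      have h2 : L * Nat.card G ≤ M * Nat.card G := Nat.mul_le_mul_right _ hc'
      omega
    · exact hc'
  have hfinal : Nat.card G ≤ L * Sg := by
    have h2 : L * Sg = (L - M) * Nat.card G := by
      have h3 : (L - M) * Nat.card G = L * Nat.card G - M * Nat.card G :=
        Nat.sub_mul L M (Nat.card G)
      omega
    have h4 : 1 ≤ L - M := by omega
    calc Nat.card G = 1 * Nat.card G := (Nat.one_mul _).symm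
      _ ≤ (L - M) * Nat.card G := Nat.mul_le_mul_right _ h4
      _ = L * Sg := h2.symm
  have hcard : Nat.card A * A.index = Nat.card G := Subgroup.card_mul_index A
  have hle : Nat.card A * A.index ≤ Nat.card A * L := by
    calc Nat.card A * A.index = Nat.card G := hcard
      _ ≤ L * Sg := hfinal
      _ ≤ L * Nat.card A := Nat.mul_le_mul_left L hgoodle
      _ = Nat.card A * L := Nat.mul_comm _ _
  exact Nat.le_of_mul_le_mul_left hle Nat.card_pos

private def gB : ℕ → ℕ
  | 0 => 1
  | n+1 => Nat.factorial (2 * (n+1) * gB n)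

private lemma gB_pos (n : ℕ) : 0 < gB n := by
  cases n with
  | zero => simp [gB]
  | succ n => exact Nat.factorial_pos _


private lemma main_aux_s19 : ∀ n : ℕ, ∀ (G : Type) [Group G] [Finite G], ∀ (A : Subgroup G),
    IsMulCommutative A → ∀ (B : Fin n → Set G),
    (∀ x : G, x ∉ A → ∃ i, x ∈ B i) →
    (∀ i, ∀ x ∈ B i, ∀ y ∈ B i, x ≠ y → ¬ Commute x y) →
    A.index ≤ gB n := by
  intro n
  induction n with
  | zero =>
    intro G _ _ A _ B hcov _
    have hA : A = ⊤ := by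
      rw [Subgroup.eq_top_iff']
      intro x
      by_contra hx
      exact (hcov x hx).choose.elim0
    rw [hA, Subgroup.index_top]
    exact le_refl _
  | succ n IH =>
    intro G _ _ A hAcomm B hcov hanti
    haveI := hAcomm
    classical
    by_cases hA : ∀ x : G, x ∈ A
    · have : A = ⊤ := (Subgroup.eq_top_iff' A).mpr hA
      rw [this, Subgroup.index_top]
      exact gB_pos _
    · -- every element outside A has a small centralizer
      have hcent : ∀ u : G, u ∉ A →
          Nat.card (Subgroup.centralizer {u} : Subgroup G) ≤ 2 * (n+1) * gB n := by
        intro u huA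
        obtain ⟨i₀, hui₀⟩ := hcov u huA
        -- a color for every element outside A
        have hcolor : ∀ x : G, ∃ i, x ∉ A → x ∈ B i := by
          intro x
          by_cases hx : x ∈ A
          · exact ⟨i₀, fun h => absurd hx h⟩
          · exact ⟨(hcov x hx).choose, fun _ => (hcov x hx).choose_spec⟩
        choose col hcol using hcolor
        -- commuting sets outside A are small
        have clique : ∀ S : Set G, (∀ x ∈ S, x ∉ A) →
            (∀ x ∈ S, ∀ y ∈ S, Commute x y) → S.ncard ≤ n + 1 := by
          intro S hSA hScomm
          have hinj : Function.Injective (fun x : S => col (x : G)) := by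
            intro x y hxy
            by_contra hne
            have hxy' : col (x : G) = col (y : G) := hxy
            have hxB := hcol (x : G) (hSA x x.2)
            have hyB := hcol (y : G) (hSA y y.2)
            rw [hxy'] at hxB
            have hneG : (x : G) ≠ (y : G) := fun hc => hne (Subtype.ext hc)
            exact hanti _ _ hxB _ hyB hneG (hScomm x x.2 y y.2)
          have := Nat.card_le_card_of_injective _ hinj
          rwa [Nat.card_coe_set_eq, Nat.card_eq_fintype_card, Fintype.card_fin] at this
        -- the abelian subgroup generated by u and C_A(u)
        set K : Set G := insert u {a : G | a ∈ A ∧ Commute a u} with hKdef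
        set Ca : Subgroup G := Subgroup.closure K with hCadef
        have hKcomm : ∀ x ∈ K, ∀ y ∈ K, Commute x y := by
          intro x hx y hy
          rcases Set.mem_insert_iff.mp hx with rfl | hx'
          · rcases Set.mem_insert_iff.mp hy with rfl | hy'
            · exact Commute.refl _
            · exact (hy'.2).symm
          · rcases Set.mem_insert_iff.mp hy with rfl | hy'
            · exact hx'.2
            · show x * y = y * x
              exact Subgroup.mul_comm_of_mem_isMulCommutative A hx'.1 hy'.1
        -- all elements of Ca commute
        have hCacomm : ∀ x ∈ Ca, ∀ y ∈ Ca, Commute x y := by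
          intro x hx y hy
          exact Subgroup.closure_induction₂ (p := fun x y _ _ => Commute x y)
            (fun x y hx hy => hKcomm x hx y hy)
            (fun x _ => Commute.one_left x) (fun x _ => Commute.one_right x)
            (fun x y z _ _ _ h1 h2 => h1.mul_left h2)
            (fun y z x _ _ _ h1 h2 => h1.mul_right h2)
            (fun x y _ _ hc => hc.inv_left)
            (fun x y _ _ hc => hc.inv_right) hx hy
        have huK : u ∈ K := Set.mem_insert _ _
        have huCa : u ∈ Ca := Subgroup.subset_closure huK
        have hCaC : Ca ≤ Subgroup.centralizer {u} := by
          rw [hCadef]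
          rw [Subgroup.closure_le]
          intro x hx
          rw [SetLike.mem_coe, Subgroup.mem_centralizer_iff]
          intro g hg
          rw [Set.mem_singleton_iff] at hg
          rw [hg]
          exact (hKcomm x hx u huK).symm
        -- the cardinality of Ca is at most 2 * (n+1)
        have hdiff : ((Ca : Set G) \ (A : Set G)).ncard ≤ n + 1 := by
          refine clique _ (fun x hx => hx.2) (fun x hx y hy => hCacomm x hx.1 y hy.1)
        have hinter : ((Ca : Set G) ∩ (A : Set G)).ncard
            ≤ ((Ca : Set G) \ (A : Set G)).ncard := by
          refine Set.ncard_le_ncard_of_injOn (fun t => t * u) ?_ ?_ (Set.toFinite _)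
          · rintro t ⟨htCa, htA⟩
            refine ⟨mul_mem htCa huCa, fun htu => huA ?_⟩
            have : t⁻¹ * (t * u) ∈ A := mul_mem (inv_mem htA) htu
            rwa [inv_mul_cancel_left] at this
          · intro a _ b _ hab
            exact mul_right_cancel hab
        have hCacard : Nat.card Ca ≤ 2 * (n + 1) := by
          have hsplit' := Set.ncard_inter_add_ncard_diff_eq_ncard (Ca : Set G) (A : Set G)
            (Set.toFinite _)
          have : Nat.card Ca = ((Ca : Set G)).ncard := Nat.card_coe_set_eq _
          omega
        -- decomposition of the centralizer of u
        set C : Subgroup G := Subgroup.centralizer {u} with hCdef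
        set Ca' : Subgroup ↥C := Ca.subgroupOf C with hCa'def
        have hCa'comm : IsMulCommutative Ca' := by
          constructor
          constructor
          intro a b
          apply Subtype.ext
          apply Subtype.ext
          have ha : ((a : ↥C) : G) ∈ Ca := Subgroup.mem_subgroupOf.mp a.2
          have hb : ((b : ↥C) : G) ∈ Ca := Subgroup.mem_subgroupOf.mp b.2
          exact hCacomm _ ha _ hb
        set B' : Fin n → Set ↥C := fun j => {v : ↥C | (v : G) ∈ B (i₀.succAbove j)} with hB'def
        have hcov' : ∀ v : ↥C, v ∉ Ca' → ∃ j, v ∈ B' j := by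
          intro v hv
          have hvu : Commute (v : G) u := by
            have := Subgroup.mem_centralizer_iff.mp v.2 u (Set.mem_singleton u)
            exact this.symm
          have hvG : (v : G) ∉ A := by
            intro hvA
            exact hv (Subgroup.mem_subgroupOf.mpr
              (Subgroup.subset_closure (Set.mem_insert_iff.mpr (Or.inr ⟨hvA, hvu⟩))))
          obtain ⟨i, hi⟩ := hcov (v : G) hvG
          have hne : i ≠ i₀ := by
            rintro rfl
            by_cases hvu' : (v : G) = u
            · exact hv (Subgroup.mem_subgroupOf.mpr (by rw [hvu']; exact huCa))
            · exact hanti i _ hi _ hui₀ hvu' hvu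
          obtain ⟨j, hj⟩ := Fin.exists_succAbove_eq hne
          exact ⟨j, show (v : G) ∈ B (i₀.succAbove j) by rw [hj]; exact hi⟩
        have hanti' : ∀ j, ∀ x ∈ B' j, ∀ y ∈ B' j, x ≠ y → ¬ Commute x y := by
          intro j x hx y hy hne hcomm
          have hG : Commute (x : G) (y : G) := by
            have := Subtype.ext_iff.mp hcomm
            rwa [Subgroup.coe_mul, Subgroup.coe_mul] at this
          exact hanti _ _ hx _ hy (fun hc => hne (Subtype.ext hc)) hG
        have hidx : Ca'.index ≤ gB n := IH ↥C Ca' hCa'comm B' hcov' hanti'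
        have hcardC : Nat.card Ca' * Ca'.index = Nat.card ↥C := Subgroup.card_mul_index Ca'
        have hcards : Nat.card Ca' = Nat.card Ca :=
          Nat.card_congr (Subgroup.subgroupOfEquivOfLe hCaC).toEquiv
        calc Nat.card ↥C = Nat.card Ca' * Ca'.index := hcardC.symm
          _ ≤ (2 * (n+1)) * gB n := by
              rw [hcards]
              exact Nat.mul_le_mul hCacard hidx
      have := index_le_of_small_centralizers G A (2 * (n+1) * gB n) hcent
      have hgb : gB (n+1) = Nat.factorial (2 * (n+1) * gB n) := rfl
      rw [hgb]
      exact this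


theorem index_bounded_by_function_of_n :
    ∃ f : ℕ → ℕ, (∀ n, 0 < f n) ∧
      ∀ (G : Type) [Group G] [Finite G] (A : Subgroup G) (n : ℕ), 0 < n →
        (∃ B : Fin n → Set G, IsSplitDecomp A B) → A.index ≤ f n := by
  refine ⟨gB, gB_pos, ?_⟩
  intro G _ _ A n _ hB
  obtain ⟨B, hB⟩ := hB
  refine main_aux_s19 n G A hB.1 B ?_ hB.2.2.2.2.2
  intro x hx
  have hx' : x ∈ (A : Set G) ∪ ⋃ i, B i := by rw [hB.2.1]; trivial
  rcases hx' with h | h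
  · exact absurd h hx
  · exact Set.mem_iUnion.mp h
end
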